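/- arXiv:2602.02492 — 7 statements merged into one kernel-verified Lean document; each statement's English description precedes it below -/
import Mathlib

section
/- Proposition A.1 (modified Poincaré polynomial identity of type C_n): For every integer n ≥ 1, the identity ∑_{w ∈ W_n} q^{ℓ_B(w)} ∏_{i ∈ Neg(w)} x_i = [n]_q! · ∏_{i=1}^{n} (1 + q^i x_i) holds in the polynomial ring ℤ[q, x_1, …, x_n], where the sum runs over all signed permutations w of rank n. -/
/-!
Proposition A.1 (modified Poincaré polynomial identity of type Cₙ).

A signed permutation of rank `n` is encoded, via the canonical bijection `w = w_I w_τ`,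
as a pair of a sign vector (`true` = sign `−1`, indexed by the value) and a permutation.
-/

/-- A signed permutation of rank `n`. -/
abbrev SignedPerm (n : ℕ) := (Fin n → Bool) × Equiv.Perm (Fin n)

/-- The 1-based window value `w(j) ∈ {−n,…,−1,1,…,n}` of a signed permutation at `j`. -/
def spVal {n : ℕ} (w : SignedPerm n) (j : Fin n) : ℤ :=
  if w.1 (w.2 j) then -(((w.2 j : ℕ) : ℤ) + 1) else ((w.2 j : ℕ) : ℤ) + 1

/-- `inv(w) = #{(i,j) : i < j, w(i) > w(j)}`. -/
def spInv {n : ℕ} (w : SignedPerm n) : ℕ :=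
  (Finset.univ.filter fun p : Fin n × Fin n => p.1 < p.2 ∧ spVal w p.2 < spVal w p.1).card

/-- `neg(w) = #{i : w(i) < 0}`. -/
def spNeg {n : ℕ} (w : SignedPerm n) : ℕ :=
  (Finset.univ.filter fun j : Fin n => spVal w j < 0).card

/-- `nsp(w) = #{(i,j) : i < j, w(i) + w(j) < 0}`. -/
def spNsp {n : ℕ} (w : SignedPerm n) : ℕ :=
  (Finset.univ.filter fun p : Fin n × Fin n => p.1 < p.2 ∧ spVal w p.1 + spVal w p.2 < 0).card

/-- The type-B Coxeter length `ℓ_B(w) = inv(w) + neg(w) + nsp(w)`. -/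
def spLenB {n : ℕ} (w : SignedPerm n) : ℕ := spInv w + spNeg w + spNsp w

/-- `Neg(w) = {−w(j) : w(j) < 0} ⊆ {1,…,n}`, as a finset of `Fin n`
(the index `i` encodes the value `i+1`). -/
def spNegSet {n : ℕ} (w : SignedPerm n) : Finset (Fin n) :=
  Finset.univ.filter fun i : Fin n => ∃ j, spVal w j = -(((i : ℕ) : ℤ) + 1)

/-- The variable `q` in `ℤ[q, x_1, …, x_n]`. -/
noncomputable def qvar (n : ℕ) : MvPolynomial (Fin n) (Polynomial ℤ) :=
  MvPolynomial.C Polynomial.X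

/-- The `q`-factorial `[n]_q! = ∏_{k=1}^{n} (1 + q + ⋯ + q^{k−1})`. -/
noncomputable def qFactorial (n : ℕ) : MvPolynomial (Fin n) (Polynomial ℤ) :=
  ∏ k ∈ Finset.range n, ∑ j ∈ Finset.range (k + 1), qvar n ^ j

/-- Inversion count of a sequence of integers. -/
def invc {n : ℕ} (g : Fin n → ℤ) : ℕ :=
  (Finset.univ.filter fun p : Fin n × Fin n => p.1 < p.2 ∧ g p.2 < g p.1).card

lemma invc_succ {n : ℕ} (g : Fin (n + 1) → ℤ) :
    invc g = (Finset.univ.filter fun x : Fin n => g x.succ < g 0).card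
      + invc (g ∘ Fin.succ) := by
  classical
  unfold invc
  rw [← Finset.card_filter_add_card_filter_not
    (s := Finset.univ.filter fun p : Fin (n+1) × Fin (n+1) => p.1 < p.2 ∧ g p.2 < g p.1)
    (p := fun p => p.1 = 0)]
  congr 1
  · rw [Finset.filter_filter]
    refine (Finset.card_bij (fun x _ => ((0 : Fin (n+1)), x.succ)) ?_ ?_ ?_).symm
    · intro a ha
      simp only [Finset.mem_filter, Finset.mem_univ, true_and] at ha
      exact Finset.mem_filter.mpr ⟨Finset.mem_univ _, ⟨Fin.succ_pos a, ha⟩, rfl⟩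
    · intro a _ b _ h
      simpa [Prod.ext_iff] using h
    · intro p hp
      simp only [Finset.mem_filter, Finset.mem_univ, true_and] at hp
      obtain ⟨⟨h1, h2⟩, h3⟩ := hp
      have h4 : p.2 ≠ 0 := by rw [h3] at h1; exact Fin.pos_iff_ne_zero.mp h1
      refine ⟨p.2.pred h4, ?_, ?_⟩
      · simp only [Finset.mem_filter, Finset.mem_univ, true_and, Fin.succ_pred]
        rw [← h3]; exact h2
      · have h5 : (p.2.pred h4).succ = p.2 := Fin.succ_pred _ _
        calc ((0 : Fin (n+1)), (p.2.pred h4).succ) = (p.1, p.2) := by rw [h5, h3]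
          _ = p := rfl
  · rw [Finset.filter_filter]
    refine (Finset.card_bij (fun x _ => (x.1.succ, x.2.succ)) ?_ ?_ ?_).symm
    · intro a ha
      simp only [Finset.mem_filter, Finset.mem_univ, true_and, Function.comp] at ha ⊢
      exact ⟨⟨Fin.succ_lt_succ_iff.mpr ha.1, ha.2⟩, Fin.succ_ne_zero _⟩
    · intro a _ b _ h
      simp only [Prod.ext_iff, Fin.succ_inj] at h
      exact Prod.ext h.1 h.2
    · intro p hp
      simp only [Finset.mem_filter, Finset.mem_univ, true_and] at hp
      obtain ⟨⟨h1, h2⟩, h3⟩ := hp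
      have h4 : p.2 ≠ 0 := by
        intro h; rw [h] at h1; exact (Fin.not_lt_zero _ h1).elim
      refine ⟨(p.1.pred h3, p.2.pred h4), ?_, ?_⟩
      · have h5 : (p.1.pred h3).succ = p.1 := Fin.succ_pred _ _
        have h6 : (p.2.pred h4).succ = p.2 := Fin.succ_pred _ _
        refine Finset.mem_filter.mpr ⟨Finset.mem_univ _, ?_, ?_⟩
        · rw [← Fin.succ_lt_succ_iff, h5, h6]; exact h1
        · show g ((p.2.pred h4).succ) < g ((p.1.pred h3).succ)
          rw [h5, h6]; exact h2
      · have h5 : (p.1.pred h3).succ = p.1 := Fin.succ_pred _ _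
        have h6 : (p.2.pred h4).succ = p.2 := Fin.succ_pred _ _
        calc ((p.1.pred h3).succ, (p.2.pred h4).succ) = (p.1, p.2) := by rw [h5, h6]
          _ = p := rfl

lemma card_filter_comp_equiv {α β : Type*} [Fintype α] [Fintype β] [DecidableEq α]
    [DecidableEq β] (e : α ≃ β) (P : β → Prop) [DecidablePred P] :
    (Finset.univ.filter fun a => P (e a)).card = (Finset.univ.filter P).card := by
  refine Finset.card_bij (fun a _ => e a) ?_ ?_ ?_
  · intro a ha; simp only [Finset.mem_filter, Finset.mem_univ, true_and] at ha ⊢; exact ha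
  · intro a _ b _ h; exact e.injective h
  · intro b hb
    simp only [Finset.mem_filter, Finset.mem_univ, true_and] at hb
    exact ⟨e.symm b, by simp [hb], by simp⟩

lemma rank_strictmono {n : ℕ} (f : Fin n → ℤ) {p p' : Fin n} (h : f p < f p') :
    (Finset.univ.filter fun y => f y < f p).card
      < (Finset.univ.filter fun y => f y < f p').card := by
  apply Finset.card_lt_card
  constructor
  · intro y hy
    simp only [Finset.mem_filter, Finset.mem_univ, true_and] at hy ⊢
    exact hy.trans h
  · intro hsub
    have := hsub (by simp [h] : p ∈ Finset.univ.filter fun y => f y < f p')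
    simp at this

lemma sum_q_invc {R : Type*} [CommRing R] (q : R) :
    ∀ (n : ℕ) (f : Fin n → ℤ), Function.Injective f →
      ∑ σ : Equiv.Perm (Fin n), q ^ invc (f ∘ σ) =
        ∏ k ∈ Finset.range n, ∑ j ∈ Finset.range (k + 1), q ^ j := by
  intro n
  induction n with
  | zero =>
    intro f _
    have h0 : ∀ σ : Equiv.Perm (Fin 0), invc (f ∘ ⇑σ) = 0 := fun σ => by
      simp [invc]
    simp [h0]
  | succ n ih =>
    intro f hf
    rw [← Equiv.sum_comp (Equiv.Perm.decomposeFin.symm) (fun σ => q ^ invc (f ∘ σ)),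
      Fintype.sum_prod_type]
    -- h p : the values at succ positions
    set h : Fin (n+1) → Fin n → Fin (n+1) := fun p y => Equiv.swap 0 p y.succ with hh
    have hinj : ∀ p, Function.Injective (f ∘ h p) := by
      intro p a b hab
      exact Fin.succ_injective n ((Equiv.swap 0 p).injective (hf hab))
    have key : ∀ (p : Fin (n+1)) (τ : Equiv.Perm (Fin n)),
        invc (f ∘ Equiv.Perm.decomposeFin.symm (p, τ))
          = (Finset.univ.filter fun y : Fin (n+1) => f y < f p).card
            + invc ((f ∘ h p) ∘ τ) := by
      intro p τ
      rw [invc_succ]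
      have e0 : (f ∘ Equiv.Perm.decomposeFin.symm (p, τ)) 0 = f p := by
        simp [Function.comp]
      have es : ∀ x : Fin n, (f ∘ Equiv.Perm.decomposeFin.symm (p, τ)) x.succ
          = (f ∘ h p) (τ x) := by
        intro x; simp [Function.comp, hh]
      congr 1
      · rw [show (Finset.univ.filter fun x : Fin n =>
            (f ∘ Equiv.Perm.decomposeFin.symm (p, τ)) x.succ
              < (f ∘ Equiv.Perm.decomposeFin.symm (p, τ)) 0)
            = Finset.univ.filter fun x : Fin n => (f ∘ h p) (τ x) < f p from by
              apply Finset.filter_congr; intro x _; rw [e0, es x]]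
        rw [card_filter_comp_equiv τ (fun y => (f ∘ h p) y < f p)]
        -- now: #{y : Fin n | f (h p y) < f p} = #{y : Fin (n+1) | f y < f p}
        refine Finset.card_bij (fun y _ => h p y) ?_ ?_ ?_
        · intro a ha; simp only [Finset.mem_filter, Finset.mem_univ, true_and] at ha ⊢
          exact ha
        · intro a _ b _ hab
          exact Fin.succ_injective n ((Equiv.swap 0 p).injective hab)
        · intro y hy
          simp only [Finset.mem_filter, Finset.mem_univ, true_and] at hy
          have hyp : y ≠ p := by
            intro hyp; rw [hyp] at hy; exact lt_irrefl _ hy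
          have h5 : Equiv.swap 0 p y ≠ 0 := by
            intro hc
            apply hyp
            have := (Equiv.swap 0 p).injective (a₁ := y) (a₂ := p)
            apply this
            rw [hc, Equiv.swap_apply_right]
          refine ⟨(Equiv.swap 0 p y).pred h5, ?_, ?_⟩
          · simp only [Finset.mem_filter, Finset.mem_univ, true_and, hh, Fin.succ_pred]
            simpa using hy
          · simp [hh, Fin.succ_pred]
      · have hfun : (f ∘ ⇑(Equiv.Perm.decomposeFin.symm (p, τ))) ∘ Fin.succ
            = (f ∘ h p) ∘ ⇑τ := funext fun x => es x
        rw [hfun]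
    have step : ∀ p : Fin (n+1),
        ∑ τ : Equiv.Perm (Fin n), q ^ invc (f ∘ Equiv.Perm.decomposeFin.symm (p, τ))
          = q ^ (Finset.univ.filter fun y : Fin (n+1) => f y < f p).card
            * ∏ k ∈ Finset.range n, ∑ j ∈ Finset.range (k + 1), q ^ j := by
      intro p
      rw [← ih (f ∘ h p) (hinj p), Finset.mul_sum]
      apply Finset.sum_congr rfl
      intro τ _
      rw [key p τ, pow_add]
    rw [Finset.sum_congr rfl fun p _ => step p, ← Finset.sum_mul,
      Finset.prod_range_succ_comm]
    congr 1
    -- ∑ p q^(rank p) = ∑_{j < n+1} q^j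
    set r : Fin (n+1) → ℕ := fun p => (Finset.univ.filter fun y : Fin (n+1) => f y < f p).card
      with hr
    have hrinj : Function.Injective r := by
      intro a b hab
      by_contra hne
      rcases lt_trichotomy (f a) (f b) with hlt | heq | hgt
      · exact absurd hab (Nat.ne_of_lt (rank_strictmono f hlt))
      · exact hne (hf heq)
      · exact absurd hab.symm (Nat.ne_of_lt (rank_strictmono f hgt))
    have himg : Finset.univ.image r = Finset.range (n + 1) := by
      apply Finset.eq_of_subset_of_card_le
      · intro j hj
        simp only [Finset.mem_image, Finset.mem_univ, true_and] at hj
        obtain ⟨p, hp⟩ := hj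
        rw [Finset.mem_range, ← hp]
        have : (Finset.univ.filter fun y : Fin (n+1) => f y < f p) ⊆ Finset.univ.erase p := by
          intro y hy
          simp only [Finset.mem_filter, Finset.mem_univ, true_and] at hy
          simp only [Finset.mem_erase, Finset.mem_univ, and_true]
          intro hc; rw [hc] at hy; exact lt_irrefl _ hy
        calc r p ≤ (Finset.univ.erase p).card := Finset.card_le_card this
          _ = n := by rw [Finset.card_erase_of_mem (Finset.mem_univ p)]; simp
          _ < n + 1 := Nat.lt_succ_self n
      · rw [Finset.card_range, Finset.card_image_of_injective _ hrinj]
        simp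
    calc ∑ p : Fin (n+1), q ^ r p
        = ∑ j ∈ Finset.univ.image r, q ^ j := by
          rw [Finset.sum_image (fun a _ b _ hab => hrinj hab)]
      _ = ∑ j ∈ Finset.range (n + 1), q ^ j := by rw [himg]


/-! ### Auxiliary lemmas about signed permutations -/

/-- The signed value attached to the index `k` by the sign vector `ε`. -/
def sval {n : ℕ} (ε : Fin n → Bool) (k : Fin n) : ℤ :=
  if ε k then -(((k : ℕ) : ℤ) + 1) else ((k : ℕ) : ℤ) + 1

lemma spVal_eq {n : ℕ} (ε : Fin n → Bool) (τ : Equiv.Perm (Fin n)) (j : Fin n) :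
    spVal (ε, τ) j = sval ε (τ j) := rfl

lemma sval_inj {n : ℕ} (ε : Fin n → Bool) : Function.Injective (sval ε) := by
  intro a b h
  unfold sval at h
  have : (a : ℕ) = (b : ℕ) := by split_ifs at h <;> omega
  exact Fin.ext this

lemma sval_neg_iff {n : ℕ} (ε : Fin n → Bool) (k : Fin n) :
    sval ε k < 0 ↔ ε k = true := by
  unfold sval
  cases hk : ε k <;> simp [hk] <;> omega

lemma sval_add_neg_iff {n : ℕ} (ε : Fin n → Bool) {k l : Fin n} (hkl : k < l) :
    sval ε k + sval ε l < 0 ↔ ε l = true := by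
  have h1 : ((k : ℕ) : ℤ) < ((l : ℕ) : ℤ) := by exact_mod_cast hkl
  unfold sval
  cases hl : ε l <;> cases hk : ε k <;> simp [hk, hl] <;> omega

lemma spInv_eq {n : ℕ} (ε : Fin n → Bool) (τ : Equiv.Perm (Fin n)) :
    spInv (ε, τ) = invc (sval ε ∘ τ) := rfl

lemma spNeg_eq {n : ℕ} (ε : Fin n → Bool) (τ : Equiv.Perm (Fin n)) :
    spNeg (ε, τ) = (Finset.univ.filter fun k : Fin n => ε k = true).card := by
  unfold spNeg
  rw [show (Finset.univ.filter fun j : Fin n => spVal (ε, τ) j < 0)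
      = Finset.univ.filter fun j : Fin n => ε (τ j) = true from
    Finset.filter_congr fun j _ => by rw [spVal_eq, sval_neg_iff]]
  exact card_filter_comp_equiv τ (fun k => ε k = true)

lemma spNegSet_eq {n : ℕ} (ε : Fin n → Bool) (τ : Equiv.Perm (Fin n)) :
    spNegSet (ε, τ) = Finset.univ.filter fun i : Fin n => ε i = true := by
  ext i
  simp only [spNegSet, Finset.mem_filter, Finset.mem_univ, true_and]
  constructor
  · rintro ⟨j, hj⟩
    rw [spVal_eq] at hj
    unfold sval at hj
    by_cases h : ε (τ j) = true
    · rw [if_pos h] at hj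
      have : ((τ j : ℕ) : ℤ) = ((i : ℕ) : ℤ) := by omega
      have : τ j = i := Fin.ext (by exact_mod_cast this)
      rwa [← this]
    · rw [if_neg h] at hj
      omega
  · intro h
    refine ⟨τ.symm i, ?_⟩
    rw [spVal_eq]
    unfold sval
    simp [h]

lemma card_lt_filter {n : ℕ} (l : Fin n) :
    (Finset.univ.filter fun k : Fin n => k < l).card = (l : ℕ) := by
  rw [show (Finset.univ.filter fun k : Fin n => k < l) = Finset.Iio l from by
    ext k; simp]
  simpa using Fin.card_Iio (b := l)

lemma card_pairs_eps {n : ℕ} (ε : Fin n → Bool) :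
    (Finset.univ.filter fun p : Fin n × Fin n => p.1 < p.2 ∧ ε p.2 = true).card
      = ∑ l ∈ Finset.univ.filter (fun l : Fin n => ε l = true), (l : ℕ) := by
  rw [Finset.card_filter, Fintype.sum_prod_type_right, Finset.sum_filter]
  apply Finset.sum_congr rfl
  intro l _
  by_cases hl : ε l = true
  · simp only [hl, and_true, if_true]
    rw [← card_lt_filter l, Finset.card_filter]
  · simp [hl]

lemma spNsp_eq {n : ℕ} (ε : Fin n → Bool) (τ : Equiv.Perm (Fin n)) :
    spNsp (ε, τ) = ∑ l ∈ Finset.univ.filter (fun l : Fin n => ε l = true), (l : ℕ) := by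
  rw [← card_pairs_eps ε]
  unfold spNsp
  refine Finset.card_bij
    (fun p _ => if τ p.1 < τ p.2 then (τ p.1, τ p.2) else (τ p.2, τ p.1)) ?_ ?_ ?_
  · intro p hp
    simp only [Finset.mem_filter, Finset.mem_univ, true_and] at hp
    obtain ⟨h1, h2⟩ := hp
    rw [spVal_eq, spVal_eq] at h2
    have hne : τ p.1 ≠ τ p.2 := fun hc => absurd (τ.injective hc) (ne_of_lt h1)
    by_cases hc : τ p.1 < τ p.2
    · rw [if_pos hc]
      exact Finset.mem_filter.mpr ⟨Finset.mem_univ _, hc, (sval_add_neg_iff ε hc).mp h2⟩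
    · rw [if_neg hc]
      have hc' : τ p.2 < τ p.1 := lt_of_le_of_ne (not_lt.mp hc) (Ne.symm hne)
      refine Finset.mem_filter.mpr ⟨Finset.mem_univ _, hc', ?_⟩
      refine (sval_add_neg_iff ε hc').mp ?_
      rw [add_comm]
      exact h2
  · intro a ha b hb hab
    simp only [Finset.mem_filter, Finset.mem_univ, true_and] at ha hb
    split_ifs at hab with h1 h2 h2 <;> rw [Prod.mk.injEq] at hab
    · exact Prod.ext (τ.injective hab.1) (τ.injective hab.2)
    · have e1 : a.1 = b.2 := τ.injective hab.1
      have e2 : a.2 = b.1 := τ.injective hab.2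
      exact absurd (e1 ▸ e2 ▸ ha.1) (asymm hb.1)
    · have e1 : a.2 = b.1 := τ.injective hab.1
      have e2 : a.1 = b.2 := τ.injective hab.2
      exact absurd (e2 ▸ e1 ▸ ha.1) (asymm hb.1)
    · exact Prod.ext (τ.injective hab.2) (τ.injective hab.1)
  · intro b hb
    simp only [Finset.mem_filter, Finset.mem_univ, true_and] at hb
    obtain ⟨h1, h2⟩ := hb
    have hsum : sval ε b.1 + sval ε b.2 < 0 := (sval_add_neg_iff ε h1).mpr h2
    have hneb : b.1 ≠ b.2 := ne_of_lt h1
    by_cases hc : τ.symm b.1 < τ.symm b.2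
    · refine ⟨(τ.symm b.1, τ.symm b.2), Finset.mem_filter.mpr ⟨Finset.mem_univ _, hc, ?_⟩, ?_⟩
      · rw [spVal_eq, spVal_eq]
        simpa using hsum
      · dsimp only
        simp only [Equiv.apply_symm_apply]
        rw [if_pos h1]
    · have hne : τ.symm b.1 ≠ τ.symm b.2 := fun hc' => hneb (τ.symm.injective hc')
      have hc' : τ.symm b.2 < τ.symm b.1 := lt_of_le_of_ne (not_lt.mp hc) (Ne.symm hne)
      refine ⟨(τ.symm b.2, τ.symm b.1), Finset.mem_filter.mpr ⟨Finset.mem_univ _, hc', ?_⟩, ?_⟩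
      · rw [spVal_eq, spVal_eq]
        simp only [Equiv.apply_symm_apply]
        rw [add_comm]
        exact hsum
      · dsimp only
        simp only [Equiv.apply_symm_apply]
        rw [if_neg (not_lt.mpr (le_of_lt h1))]

lemma spLenB_eq {n : ℕ} (ε : Fin n → Bool) (τ : Equiv.Perm (Fin n)) :
    spLenB (ε, τ) = invc (sval ε ∘ τ)
      + ∑ i ∈ Finset.univ.filter (fun i : Fin n => ε i = true), ((i : ℕ) + 1) := by
  unfold spLenB
  rw [spInv_eq, spNeg_eq, spNsp_eq]
  have : ∑ i ∈ Finset.univ.filter (fun i : Fin n => ε i = true), ((i : ℕ) + 1)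
      = (∑ i ∈ Finset.univ.filter (fun i : Fin n => ε i = true), (i : ℕ))
        + (Finset.univ.filter (fun i : Fin n => ε i = true)).card := by
    rw [Finset.sum_add_distrib, Finset.card_eq_sum_ones]
  omega


/-- **Proposition A.1**: for every `n ≥ 1`,
`∑_{w ∈ W_n} q^{ℓ_B(w)} ∏_{i ∈ Neg(w)} x_i = [n]_q! ∏_{i=1}^{n} (1 + qⁱ x_i)`
in `ℤ[q, x_1, …, x_n]`. -/
theorem modified_poincare_typeC (n : ℕ) (hn : 1 ≤ n) :
    ∑ w : SignedPerm n, qvar n ^ spLenB w * ∏ i ∈ spNegSet w, MvPolynomial.X i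
      = qFactorial n * ∏ i : Fin n, (1 + qvar n ^ ((i : ℕ) + 1) * MvPolynomial.X i) := by
  classical
  rw [Fintype.sum_prod_type]
  have hterm : ∀ (ε : Fin n → Bool) (τ : Equiv.Perm (Fin n)),
      qvar n ^ spLenB (ε, τ) * ∏ i ∈ spNegSet (ε, τ), MvPolynomial.X i
        = qvar n ^ invc (sval ε ∘ τ)
          * ∏ i ∈ Finset.univ.filter (fun i : Fin n => ε i = true),
              (qvar n ^ ((i : ℕ) + 1) * MvPolynomial.X i) := by
    intro ε τ
    rw [spLenB_eq, spNegSet_eq, pow_add, Finset.prod_mul_distrib,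
      ← Finset.prod_pow_eq_pow_sum, mul_assoc]
  calc ∑ ε : Fin n → Bool, ∑ τ : Equiv.Perm (Fin n),
        qvar n ^ spLenB (ε, τ) * ∏ i ∈ spNegSet (ε, τ), MvPolynomial.X i
      = ∑ ε : Fin n → Bool, qFactorial n
            * ∏ i ∈ Finset.univ.filter (fun i : Fin n => ε i = true),
                (qvar n ^ ((i : ℕ) + 1) * MvPolynomial.X i) := by
        apply Finset.sum_congr rfl
        intro ε _
        rw [Finset.sum_congr rfl fun τ _ => hterm ε τ, ← Finset.sum_mul,
          sum_q_invc (qvar n) n (sval ε) (sval_inj ε)]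
        rfl
    _ = qFactorial n * ∑ ε : Fin n → Bool,
            ∏ i ∈ Finset.univ.filter (fun i : Fin n => ε i = true),
                (qvar n ^ ((i : ℕ) + 1) * MvPolynomial.X i) := by
        rw [Finset.mul_sum]
    _ = _ := by
        congr 1
        have h1 : ∀ i : Fin n, (1 + qvar n ^ ((i : ℕ) + 1) * MvPolynomial.X i)
            = ∑ b ∈ (Finset.univ : Finset Bool),
                (if b = true then qvar n ^ ((i : ℕ) + 1) * MvPolynomial.X i else 1) := by
          intro i
          rw [Fintype.sum_bool]
          simp [add_comm]
        rw [Finset.prod_congr rfl fun i _ => h1 i, Finset.prod_univ_sum,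
          Fintype.piFinset_univ]
        apply Finset.sum_congr rfl
        intro ε _
        rw [Finset.prod_filter]
end

section
/- Proposition A.2 (modified Poincaré polynomial identity with type D_n weights): For every integer n ≥ 1, the identity ∑_{w ∈ W_n} q^{inv(w)+nsp(w)} ∏_{i ∈ Neg(w)} x_i = [n]_q! · ∏_{i=1}^{n} (1 + q^{i−1} x_i) holds in the polynomial ring ℤ[q, x_1, …, x_n], where the sum runs over all signed permutations w of rank n. -/
open Finset

namespace PropA2

variable {n : ℕ}

/-- Position-based Lehmer code of a permutation. -/
def codeF (σ : Equiv.Perm (Fin n)) (m : Fin n) : ℕ :=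
  ((Finset.Iio m).filter fun k => σ m < σ k).card

lemma codeF_le (σ : Equiv.Perm (Fin n)) (m : Fin n) : codeF σ m ≤ (m : ℕ) := by
  calc codeF σ m ≤ (Finset.Iio m).card := Finset.card_filter_le _ _
    _ = (m : ℕ) := Fin.card_Iio m

def tcode (σ : Equiv.Perm (Fin n)) (m : Fin n) : ℕ :=
  ((Finset.Ioi m).filter fun k => σ m < σ k).card

lemma code_tcode (σ : Equiv.Perm (Fin n)) (m : Fin n) :
    codeF σ m + tcode σ m + (σ m : ℕ) = n - 1 := by
  have hm : (σ m : ℕ) < n := (σ m).isLt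
  have hsplit : (Finset.univ.filter fun k => σ m < σ k)
      = ((Finset.Iio m).filter fun k => σ m < σ k) ∪ ((Finset.Ioi m).filter fun k => σ m < σ k) := by
    ext k
    simp only [mem_filter, mem_univ, true_and, mem_union, mem_Iio, mem_Ioi]
    constructor
    · intro h
      rcases lt_trichotomy k m with h' | h' | h'
      · exact Or.inl ⟨h', h⟩
      · subst h'; exact absurd h (lt_irrefl _)
      · exact Or.inr ⟨h', h⟩
    · rintro (⟨_, h⟩ | ⟨_, h⟩) <;> exact h
  have hdisj : Disjoint ((Finset.Iio m).filter fun k => σ m < σ k)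
      ((Finset.Ioi m).filter fun k => σ m < σ k) := by
    refine Finset.disjoint_left.2 ?_
    intro a ha hb
    simp only [mem_filter, mem_Iio, mem_Ioi] at ha hb
    exact absurd (ha.1.trans hb.1) (lt_irrefl _)
  have hcard : (Finset.univ.filter fun k => σ m < σ k).card
      = codeF σ m + tcode σ m := by
    rw [hsplit, Finset.card_union_of_disjoint hdisj]; rfl
  have hval : (Finset.univ.filter fun k => σ m < σ k).card
      = (Finset.Ioi (σ m)).card := by
    apply Finset.card_bij (fun k _ => σ k)
    · intro a ha; simp only [mem_filter, mem_univ, true_and] at ha; simpa using ha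
    · intro a _ b _ h; exact σ.injective h
    · intro b hb
      refine ⟨σ.symm b, ?_, by simp⟩
      simp only [mem_filter, mem_univ, true_and, Equiv.apply_symm_apply]
      simpa using hb
  have := Fin.card_Ioi (σ m)
  omega

lemma code_aux (σ σ' : Equiv.Perm (Fin n)) (j : Fin n)
    (htail : ∀ i, j < i → σ i = σ' i) (hlt : σ j < σ' j)
    (hc : codeF σ j = codeF σ' j) : False := by
  have h1 := code_tcode σ j
  have h2 := code_tcode σ' j
  have hltn : (σ j : ℕ) < (σ' j : ℕ) := hlt
  have key : tcode σ j ≤ tcode σ' j + (Finset.Ioo (σ j) (σ' j)).card := by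
    have hsub : ((Finset.Ioi j).filter fun k => σ j < σ k)
        ⊆ ((Finset.Ioi j).filter fun k => σ' j < σ' k)
          ∪ ((Finset.Ioi j).filter fun k => σ k ∈ Finset.Ioo (σ j) (σ' j)) := by
      intro k hk
      simp only [mem_filter, mem_Ioi, mem_union, mem_Ioo] at hk ⊢
      obtain ⟨hjk, hv⟩ := hk
      have hkeq : σ k = σ' k := htail k hjk
      have hne : σ k ≠ σ' j := by
        rw [hkeq]
        intro h
        exact absurd (σ'.injective h) (ne_of_gt hjk)
      rcases lt_or_ge (σ' j) (σ k) with h | h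
      · exact Or.inl ⟨hjk, hkeq ▸ h⟩
      · exact Or.inr ⟨hjk, hv, lt_of_le_of_ne h hne⟩
    calc tcode σ j ≤ (((Finset.Ioi j).filter fun k => σ' j < σ' k)
          ∪ ((Finset.Ioi j).filter fun k => σ k ∈ Finset.Ioo (σ j) (σ' j))).card :=
          Finset.card_le_card hsub
      _ ≤ tcode σ' j + ((Finset.Ioi j).filter fun k => σ k ∈ Finset.Ioo (σ j) (σ' j)).card :=
          Finset.card_union_le _ _
      _ ≤ tcode σ' j + (Finset.Ioo (σ j) (σ' j)).card := by
          apply Nat.add_le_add_left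
          apply Finset.card_le_card_of_injOn (fun k => σ k)
          · intro a ha; exact (Finset.mem_filter.1 ha).2
          · intro a _ b _ h; exact σ.injective h
  have := Fin.card_Ioo (σ j) (σ' j)
  omega

lemma code_injective : Function.Injective (codeF (n := n)) := by
  intro σ σ' h
  by_contra hne
  have hex : ∃ j, σ j ≠ σ' j := by
    by_contra hall
    push_neg at hall
    exact hne (Equiv.ext hall)
  set s := Finset.univ.filter fun j : Fin n => σ j ≠ σ' j with hs
  have hsne : s.Nonempty := by
    obtain ⟨j, hj⟩ := hex
    exact ⟨j, by simp [hs, hj]⟩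
  set j := s.max' hsne with hj
  have hjs : σ j ≠ σ' j := by
    have := s.max'_mem hsne
    simpa [hs] using this
  have htail : ∀ i, j < i → σ i = σ' i := by
    intro i hi
    by_contra hne'
    have : i ∈ s := by simp [hs, hne']
    exact absurd (s.le_max' i this) (not_le.2 hi)
  have hcj : codeF σ j = codeF σ' j := by rw [h]
  rcases lt_or_gt_of_ne hjs with hlt | hlt
  · exact code_aux σ σ' j htail hlt hcj
  · exact code_aux σ' σ j (fun i hi => (htail i hi).symm) hlt hcj.symm

/-- The code map as a function into the product of `Fin (m+1)`. -/
def codeMap (σ : Equiv.Perm (Fin n)) : ∀ m : Fin n, Fin ((m : ℕ) + 1) :=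
  fun m => ⟨codeF σ m, Nat.lt_succ_of_le (codeF_le σ m)⟩

lemma codeMap_bijective : Function.Bijective (codeMap (n := n)) := by
  rw [Fintype.bijective_iff_injective_and_card]
  constructor
  · intro σ σ' h
    apply code_injective
    funext m
    exact congrArg Fin.val (congrFun h m)
  · rw [Fintype.card_perm, Fintype.card_fin, Fintype.card_pi]
    simp only [Fintype.card_fin]
    rw [Fin.prod_univ_eq_prod_range (fun i => i + 1) n]
    exact (Finset.prod_range_add_one_eq_factorial n).symm

lemma spVal_symm (w : SignedPerm n) (k : Fin n) :
    spVal w (w.2.symm k) = if w.1 k then -(((k : ℕ) : ℤ) + 1) else ((k : ℕ) : ℤ) + 1 := by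
  simp [spVal]

lemma spNegSet_eq (w : SignedPerm n) :
    spNegSet w = Finset.univ.filter fun i => w.1 i = true := by
  ext i
  simp only [spNegSet, mem_filter, mem_univ, true_and]
  constructor
  · rintro ⟨j, hj⟩
    unfold spVal at hj
    by_cases h : w.1 (w.2 j)
    · rw [if_pos h] at hj
      have h2 : ((w.2 j : ℕ) : ℤ) = ((i : ℕ) : ℤ) := by omega
      have h3 : w.2 j = i := Fin.ext (by exact_mod_cast h2)
      rw [h3] at h
      exact h
    · rw [if_neg h] at hj
      omega
  · intro h
    refine ⟨w.2.symm i, ?_⟩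
    rw [spVal_symm, if_pos h]

lemma sum_pairs {M : Type*} [AddCommMonoid M] (f : Fin n × Fin n → M)
    (hdiag : ∀ a, f (a, a) = 0) :
    ∑ p : Fin n × Fin n, f p
      = ∑ p ∈ Finset.univ.filter (fun p : Fin n × Fin n => p.1 < p.2), (f p + f p.swap) := by
  rw [Finset.sum_add_distrib]
  have h2 : ∑ p ∈ Finset.univ.filter (fun p : Fin n × Fin n => p.1 < p.2), f p.swap
      = ∑ p ∈ Finset.univ.filter (fun p : Fin n × Fin n => p.2 < p.1), f p := by
    refine Finset.sum_nbij' (fun p => p.swap) (fun p => p.swap) ?_ ?_ ?_ ?_ ?_ <;>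
      simp [Finset.mem_filter]
  rw [h2]
  have h3 : ∑ p ∈ Finset.univ.filter (fun p : Fin n × Fin n => p.2 < p.1), f p
      = ∑ p ∈ Finset.univ.filter (fun p : Fin n × Fin n => ¬ p.1 < p.2), f p := by
    apply Finset.sum_subset
    · intro p hp
      simp only [mem_filter, mem_univ, true_and] at hp ⊢
      exact not_lt_of_gt hp
    · intro p hp hnp
      simp only [mem_filter, mem_univ, true_and] at hp hnp
      have : p.1 = p.2 := le_antisymm (not_lt.1 hnp) (not_lt.1 hp)
      have hpp : p = (p.1, p.1) := by
        rw [Prod.ext_iff]; exact ⟨rfl, this.symm⟩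
      rw [hpp]; exact hdiag p.1
  rw [h3, Finset.sum_filter_add_sum_filter_not]

lemma stat_eq (w : SignedPerm n) :
    spInv w + spNsp w
      = ∑ m : Fin n, (if w.1 m then 2 * (m : ℕ) - codeF w.2.symm m else codeF w.2.symm m) := by
  set σ := w.2.symm with hσ
  -- F as a function on all pairs of positions
  set F : Fin n × Fin n → ℕ := fun p =>
    if p.1 < p.2 then
      ((if spVal w p.2 < spVal w p.1 then 1 else 0)
        + (if spVal w p.1 + spVal w p.2 < 0 then 1 else 0))
    else 0 with hF
  have step1 : spInv w + spNsp w = ∑ p : Fin n × Fin n, F p := by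
    have hi : spInv w = ∑ p : Fin n × Fin n,
        if p.1 < p.2 ∧ spVal w p.2 < spVal w p.1 then 1 else 0 := by
      rw [spInv, Finset.card_filter]
    have hn2 : spNsp w = ∑ p : Fin n × Fin n,
        if p.1 < p.2 ∧ spVal w p.1 + spVal w p.2 < 0 then 1 else 0 := by
      rw [spNsp, Finset.card_filter]
    rw [hi, hn2, ← Finset.sum_add_distrib]
    apply Finset.sum_congr rfl
    intro p _
    by_cases h : p.1 < p.2 <;> simp [hF, h, and_comm]
  rw [step1]
  -- reindex by positions = σ of values
  have step2 : ∑ p : Fin n × Fin n, F p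
      = ∑ p : Fin n × Fin n, F (σ p.1, σ p.2) := by
    exact (Function.Bijective.sum_comp
      (Equiv.bijective (σ.prodCongr σ)) F).symm
  rw [step2]
  have step3 : ∑ p : Fin n × Fin n, F (σ p.1, σ p.2)
      = ∑ p ∈ Finset.univ.filter (fun p : Fin n × Fin n => p.1 < p.2),
          (F (σ p.1, σ p.2) + F (σ p.2, σ p.1)) := by
    exact sum_pairs (fun p => F (σ p.1, σ p.2)) (fun a => by simp [hF])
  rw [step3]
  -- pointwise evaluation on value pairs k < m
  have step4 : ∀ p : Fin n × Fin n, p.1 < p.2 →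
      F (σ p.1, σ p.2) + F (σ p.2, σ p.1)
        = (if σ p.2 < σ p.1 then 1 else if w.1 p.2 then 2 else 0) := by
    rintro ⟨k, m⟩ hkm
    simp only at hkm ⊢
    have hvk : spVal w (σ k) = if w.1 k then -(((k : ℕ) : ℤ) + 1) else ((k : ℕ) : ℤ) + 1 :=
      spVal_symm w k
    have hvm : spVal w (σ m) = if w.1 m then -(((m : ℕ) : ℤ) + 1) else ((m : ℕ) : ℤ) + 1 :=
      spVal_symm w m
    have hkmn : ((k : ℕ) : ℤ) < ((m : ℕ) : ℤ) := by exact_mod_cast hkm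
    have hσne : σ k ≠ σ m := fun h => absurd (σ.injective h) (ne_of_lt hkm)
    rcases lt_or_gt_of_ne hσne with h | h
    · rw [if_neg (not_lt_of_gt h)]
      have e1 : F (σ k, σ m) = if w.1 m then 2 else 0 := by
        rw [hF]
        simp only [if_pos h, hvk, hvm]
        split_ifs <;> omega
      have e2 : F (σ m, σ k) = 0 := by
        rw [hF]; simp only [if_neg (not_lt_of_gt h)]
      rw [e1, e2, Nat.add_zero]
    · rw [if_pos h]
      have e1 : F (σ k, σ m) = 0 := by
        rw [hF]; simp only [if_neg (not_lt_of_gt h)]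
      have e2 : F (σ m, σ k) = 1 := by
        rw [hF]
        simp only [if_pos h, hvk, hvm]
        split_ifs <;> omega
      rw [e1, e2, Nat.zero_add]
  rw [Finset.sum_congr rfl (fun p hp => step4 p (by simpa using hp))]
  -- group by the second coordinate m
  have step5 : ∑ p ∈ Finset.univ.filter (fun p : Fin n × Fin n => p.1 < p.2),
      (if σ p.2 < σ p.1 then 1 else if w.1 p.2 then 2 else 0)
      = ∑ m : Fin n, ∑ k ∈ Finset.Iio m,
          (if σ m < σ k then 1 else if w.1 m then 2 else 0) := by
    rw [Finset.sum_filter, Fintype.sum_prod_type_right]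
    apply Finset.sum_congr rfl
    intro m _
    have hfil : Finset.univ.filter (fun k : Fin n => k < m) = Finset.Iio m := by
      ext k; simp
    rw [← hfil, ← Finset.sum_filter]
  rw [step5]
  apply Finset.sum_congr rfl
  intro m _
  have hsplit := Finset.card_filter_add_card_filter_not
    (s := Finset.Iio m) (p := fun k => σ m < σ k)
  have hIio := Fin.card_Iio m
  have hcode : codeF σ m = ((Finset.Iio m).filter fun k => σ m < σ k).card := rfl
  rw [Finset.sum_ite, Finset.sum_const, Finset.sum_const, smul_eq_mul, smul_eq_mul]
  cases hm : w.1 m <;> simp [hm] at hsplit hcode ⊢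
  · omega
  · omega

end PropA2

open Finset in
/-- **Proposition A.2**: for every `n ≥ 1`,
`∑_{w ∈ W_n} q^{inv(w)+nsp(w)} ∏_{i ∈ Neg(w)} x_i = [n]_q! ∏_{i=1}^{n} (1 + q^{i−1} x_i)`
in `ℤ[q, x_1, …, x_n]`. -/
theorem modified_poincare_typeD (n : ℕ) (hn : 1 ≤ n) :
    ∑ w : SignedPerm n, qvar n ^ (spInv w + spNsp w) * ∏ i ∈ spNegSet w, MvPolynomial.X i
      = qFactorial n * ∏ i : Fin n, (1 + qvar n ^ (i : ℕ) * MvPolynomial.X i) := by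
  classical
  set R := MvPolynomial (Fin n) (Polynomial ℤ)
  set q : R := qvar n with hq
  -- Step 1: rewrite each summand using the statistic and negative-set lemmas
  have hterm : ∀ w : SignedPerm n,
      q ^ (spInv w + spNsp w) * ∏ i ∈ spNegSet w, (MvPolynomial.X i : R)
      = q ^ (∑ m : Fin n, (if w.1 m then 2 * (m : ℕ) - PropA2.codeF w.2.symm m
              else PropA2.codeF w.2.symm m))
        * ∏ m : Fin n, (if w.1 m then (MvPolynomial.X m : R) else 1) := by
    intro w
    rw [PropA2.stat_eq, PropA2.spNegSet_eq, Finset.prod_filter]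
  rw [Finset.sum_congr rfl fun w _ => hterm w, Fintype.sum_prod_type]
  -- Step 2: evaluate the inner sum over permutations for a fixed sign vector
  have hinner : ∀ ε : Fin n → Bool,
      (∑ τ : Equiv.Perm (Fin n),
        q ^ (∑ m : Fin n, (if ε m then 2 * (m : ℕ) - PropA2.codeF τ.symm m
              else PropA2.codeF τ.symm m)))
      = ∏ m : Fin n, ((∑ j ∈ Finset.range ((m : ℕ) + 1), q ^ j)
          * (if ε m then q ^ (m : ℕ) else 1)) := by
    intro ε
    have h1 : (∑ τ : Equiv.Perm (Fin n),
        q ^ (∑ m : Fin n, (if ε m then 2 * (m : ℕ) - PropA2.codeF τ.symm m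
              else PropA2.codeF τ.symm m)))
        = ∑ σ : Equiv.Perm (Fin n),
            q ^ (∑ m : Fin n, (if ε m then 2 * (m : ℕ) - PropA2.codeF σ m
              else PropA2.codeF σ m)) :=
      Function.Bijective.sum_comp Equiv.symm_bijective
        (fun σ => q ^ (∑ m : Fin n, (if ε m then 2 * (m : ℕ) - PropA2.codeF σ m
              else PropA2.codeF σ m)))
    rw [h1]
    have h2 : (∑ σ : Equiv.Perm (Fin n),
        q ^ (∑ m : Fin n, (if ε m then 2 * (m : ℕ) - PropA2.codeF σ m
              else PropA2.codeF σ m)))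
        = ∑ b : (∀ m : Fin n, Fin ((m : ℕ) + 1)),
            q ^ (∑ m : Fin n, (if ε m then 2 * (m : ℕ) - (b m : ℕ) else (b m : ℕ))) :=
      Function.Bijective.sum_comp PropA2.codeMap_bijective
        (fun b => q ^ (∑ m : Fin n, (if ε m then 2 * (m : ℕ) - (b m : ℕ) else (b m : ℕ))))
    rw [h2]
    have h3 : ∀ b : (∀ m : Fin n, Fin ((m : ℕ) + 1)),
        q ^ (∑ m : Fin n, (if ε m then 2 * (m : ℕ) - (b m : ℕ) else (b m : ℕ)))
        = ∏ m : Fin n, q ^ (if ε m then 2 * (m : ℕ) - (b m : ℕ) else (b m : ℕ)) :=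
      fun b => (Finset.prod_pow_eq_pow_sum _ _ _).symm
    rw [Finset.sum_congr rfl fun b _ => h3 b]
    rw [← Fintype.piFinset_univ,
      ← Finset.prod_univ_sum (fun m : Fin n => (Finset.univ : Finset (Fin ((m : ℕ) + 1))))
        (fun m c => q ^ (if ε m = true then 2 * (m : ℕ) - (c : ℕ) else (c : ℕ)))]
    apply Finset.prod_congr rfl
    intro m _
    by_cases hε : ε m
    · simp only [hε, if_true]
      rw [Fin.sum_univ_eq_sum_range (fun c => q ^ (2 * (m : ℕ) - c)) ((m : ℕ) + 1)]
      rw [← Finset.sum_range_reflect]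
      have h4 : ∀ j ∈ Finset.range ((m : ℕ) + 1),
          q ^ (2 * (m : ℕ) - ((m : ℕ) + 1 - 1 - j)) = q ^ (m : ℕ) * q ^ j := by
        intro j hj
        rw [Finset.mem_range] at hj
        rw [← pow_add]
        congr 1
        omega
      rw [Finset.sum_congr rfl h4, ← Finset.mul_sum]
      ring
    · simp only [hε, Bool.false_eq_true, if_false]
      rw [Fin.sum_univ_eq_sum_range (fun c => q ^ c) ((m : ℕ) + 1), mul_one]
  -- Step 3: put it together and sum over sign vectors
  have hstep : ∀ ε : Fin n → Bool,
      (∑ τ : Equiv.Perm (Fin n),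
        q ^ (∑ m : Fin n, (if ε m then 2 * (m : ℕ) - PropA2.codeF τ.symm m
              else PropA2.codeF τ.symm m))
          * ∏ m : Fin n, (if ε m then (MvPolynomial.X m : R) else 1))
      = ∏ m : Fin n, (((∑ j ∈ Finset.range ((m : ℕ) + 1), q ^ j)
            * (if ε m then q ^ (m : ℕ) else 1))
          * (if ε m then (MvPolynomial.X m : R) else 1)) := by
    intro ε
    rw [← Finset.sum_mul, hinner ε, ← Finset.prod_mul_distrib]
  rw [Finset.sum_congr rfl fun ε _ => hstep ε]
  rw [← Fintype.piFinset_univ,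
    ← Finset.prod_univ_sum (fun _ : Fin n => (Finset.univ : Finset Bool))
      (fun m b => ((∑ j ∈ Finset.range ((m : ℕ) + 1), q ^ j)
          * (if b = true then q ^ (m : ℕ) else 1))
        * (if b = true then (MvPolynomial.X m : R) else 1))]
  have hfin : ∀ m : Fin n,
      (∑ b : Bool, ((∑ j ∈ Finset.range ((m : ℕ) + 1), q ^ j)
            * (if b then q ^ (m : ℕ) else 1))
          * (if b then (MvPolynomial.X m : R) else 1))
      = (∑ j ∈ Finset.range ((m : ℕ) + 1), q ^ j)
          * (1 + q ^ (m : ℕ) * MvPolynomial.X m) := by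
    intro m
    rw [Fintype.sum_bool]
    simp only [Bool.false_eq_true, if_true, if_false, mul_one]
    ring
  rw [Finset.prod_congr rfl fun m _ => hfin m, Finset.prod_mul_distrib]
  congr 1
  rw [qFactorial, ← Fin.prod_univ_eq_prod_range
    (fun k => ∑ j ∈ Finset.range (k + 1), qvar n ^ j) n]
end

section
/- (Combinatorial core of Theorems 3.26 and 4.14, verifying Kato's condition W_σ = W_(σ)): Let G be a commutative group, let s ≥ 1, and let z = (z_1,…,z_s) ∈ G^s. Let the hyperoctahedral group W_s = {±1}^s ⋊ S_s act on G^s by letting S_s permute the coordinates and letting the i-th sign factor invert the i-th coordinate (so for (ε,τ) ∈ W_s, the i-th coordinate of (ε,τ)·z is z_{τ^{−1}(i)}^{ε_i}). Then the stabilizer of z in W_s is generated by the reflections it contains, namely by: the transpositions (1,(i j)) for those pairs i ≠ j with z_i = z_j; the sign changes (e_i, id) for those indices i with z_i² = 1; and the elements (e_i e_j, (i j)) for those pairs i ≠ j with z_i z_j = 1. (Here e_i ∈ {±1}^s denotes the vector with −1 in coordinate i and +1 elsewhere.) -/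
/-!
The combinatorial core of Theorems 3.26 and 4.14 (Kato's condition `W_σ = W_(σ)`):
for a commutative group `G` and `z ∈ Gˢ`, the stabilizer of `z` in the hyperoctahedral
group `W_s = {±1}ˢ ⋊ S_s` is generated by the reflections it contains.
-/

/-- The hyperoctahedral group `W_s = {±1}ˢ ⋊ S_s`, encoded as pairs
(sign vector, permutation); `true` encodes the sign `−1`. -/
structure HyperOct (s : ℕ) where
  sgn : Fin s → Bool
  perm : Equiv.Perm (Fin s)

namespace HyperOct

variable {s : ℕ}

@[ext]
lemma ext {a b : HyperOct s} (h1 : a.sgn = b.sgn) (h2 : a.perm = b.perm) : a = b := by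
  cases a; cases b; cases h1; cases h2; rfl

instance : Mul (HyperOct s) :=
  ⟨fun a b => ⟨fun i => xor (a.sgn i) (b.sgn (a.perm⁻¹ i)), a.perm * b.perm⟩⟩

instance : One (HyperOct s) := ⟨⟨fun _ => false, 1⟩⟩

instance : Inv (HyperOct s) := ⟨fun a => ⟨fun i => a.sgn (a.perm i), a.perm⁻¹⟩⟩

@[simp] lemma mul_sgn (a b : HyperOct s) (i : Fin s) :
    (a * b).sgn i = xor (a.sgn i) (b.sgn (a.perm⁻¹ i)) := rfl

@[simp] lemma mul_perm (a b : HyperOct s) : (a * b).perm = a.perm * b.perm := rfl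

@[simp] lemma one_sgn (i : Fin s) : (1 : HyperOct s).sgn i = false := rfl

@[simp] lemma one_perm : (1 : HyperOct s).perm = 1 := rfl

@[simp] lemma inv_sgn (a : HyperOct s) (i : Fin s) : a⁻¹.sgn i = a.sgn (a.perm i) := rfl

@[simp] lemma inv_perm (a : HyperOct s) : a⁻¹.perm = a.perm⁻¹ := rfl

instance : Group (HyperOct s) where
  mul_assoc a b c := by
    ext i
    · simp [Bool.xor_assoc, mul_inv_rev, Equiv.Perm.mul_apply]
    · simp [mul_assoc]
  one_mul a := by ext i <;> simp
  mul_one a := by ext i <;> simp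
  inv_mul_cancel a := by ext i <;> simp

/-- The action of `W_s` on `Gˢ`: the `i`-th coordinate of `(ε,τ)·z` is `z_{τ⁻¹(i)}^{ε_i}`. -/
instance instSMul {G : Type*} [CommGroup G] : SMul (HyperOct s) (Fin s → G) :=
  ⟨fun w z i => if w.sgn i then (z (w.perm⁻¹ i))⁻¹ else z (w.perm⁻¹ i)⟩

@[simp] lemma smul_apply {G : Type*} [CommGroup G] (w : HyperOct s) (z : Fin s → G)
    (i : Fin s) : (w • z) i = if w.sgn i then (z (w.perm⁻¹ i))⁻¹ else z (w.perm⁻¹ i) := rfl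

instance instMulAction {G : Type*} [CommGroup G] : MulAction (HyperOct s) (Fin s → G) where
  one_smul z := by funext i; simp
  mul_smul a b z := by
    funext i
    simp only [smul_apply, mul_sgn, mul_perm, mul_inv_rev, Equiv.Perm.mul_apply]
    cases a.sgn i <;> cases b.sgn (a.perm⁻¹ i) <;> simp

/-- The transposition `(1, (i j))` of `W_s`. -/
def transpEl (i j : Fin s) : HyperOct s := ⟨fun _ => false, Equiv.swap i j⟩

/-- The sign change `(e_i, id)` of `W_s`. -/
def signEl (i : Fin s) : HyperOct s := ⟨fun k => decide (k = i), 1⟩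

/-- The reflection `(e_i e_j, (i j))` of `W_s`. -/
def mixedEl (i j : Fin s) : HyperOct s := ⟨fun k => decide (k = i ∨ k = j), Equiv.swap i j⟩

end HyperOct

section Aux

open HyperOct Finset

variable {s : ℕ} {G : Type*} [CommGroup G]

lemma transpEl_smul (z : Fin s → G) (i j : Fin s) (h : z i = z j) :
    transpEl i j • z = z := by
  funext k
  simp only [HyperOct.smul_apply, transpEl, Equiv.swap_inv, Bool.false_eq_true, if_false]
  rcases eq_or_ne k i with rfl | hki
  · rw [Equiv.swap_apply_left, h]
  rcases eq_or_ne k j with rfl | hkj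
  · rw [Equiv.swap_apply_right, h]
  · rw [Equiv.swap_apply_of_ne_of_ne hki hkj]

lemma signEl_smul (z : Fin s → G) (i : Fin s) (h : z i ^ 2 = 1) :
    signEl i • z = z := by
  funext k
  simp only [HyperOct.smul_apply, signEl, inv_one, Equiv.Perm.one_apply]
  rcases eq_or_ne k i with rfl | hk
  · simp only [decide_eq_true_eq, if_pos rfl]
    have : z k * z k = 1 := by rw [← sq]; exact h
    exact inv_eq_of_mul_eq_one_left this
  · simp [hk]

lemma mixedEl_smul (z : Fin s → G) (i j : Fin s) (hij : i ≠ j) (h : z i * z j = 1) :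
    mixedEl i j • z = z := by
  funext k
  simp only [HyperOct.smul_apply, mixedEl, Equiv.swap_inv]
  rcases eq_or_ne k i with rfl | hki
  · rw [if_pos (by simp), Equiv.swap_apply_left]
    exact inv_eq_of_mul_eq_one_left h
  rcases eq_or_ne k j with rfl | hkj
  · rw [if_pos (by simp), Equiv.swap_apply_right]
    exact inv_eq_of_mul_eq_one_right h
  · rw [if_neg (by simp [hki, hkj]), Equiv.swap_apply_of_ne_of_ne hki hkj]

lemma stab_aux (z : Fin s → G) (S : Set (HyperOct s))
    (hT : ∀ i j : Fin s, i ≠ j → z i = z j → transpEl i j ∈ S)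
    (hSg : ∀ i : Fin s, z i ^ 2 = 1 → signEl i ∈ S)
    (hM : ∀ i j : Fin s, i ≠ j → z i * z j = 1 → mixedEl i j ∈ S) :
    ∀ n : ℕ, ∀ w : HyperOct s,
      w.perm.support.card * (s + 1) + (univ.filter fun k => w.sgn k = true).card ≤ n →
      w • z = z → w ∈ Subgroup.closure S := by
  intro n
  induction n using Nat.strong_induction_on with
  | _ n ih =>
  intro w hμ hw
  by_cases hp : w.perm = 1
  · by_cases hsg : ∀ k, w.sgn k = false
    · have hw1 : w = 1 := HyperOct.ext (funext hsg) hp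
      rw [hw1]; exact one_mem _
    · push_neg at hsg
      obtain ⟨i, hi⟩ := hsg
      simp only [ne_eq, Bool.not_eq_false] at hi
      have hzi : z i ^ 2 = 1 := by
        have hc := congrFun hw i
        rw [HyperOct.smul_apply, hp, if_pos hi] at hc
        simp only [inv_one, Equiv.Perm.one_apply] at hc
        rw [sq]
        nth_rewrite 1 [← hc]
        simp
      have hrS : signEl i ∈ S := hSg i hzi
      have hw' : (signEl i * w) • z = z := by
        rw [mul_smul, hw, signEl_smul z i hzi]
      have hfil : (univ.filter fun k => (signEl i * w).sgn k = true)
          = (univ.filter fun k => w.sgn k = true).erase i := by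
        ext k
        simp only [mem_filter, mem_univ, true_and, mem_erase, mul_sgn, signEl]
        rcases eq_or_ne k i with rfl | hk
        · simp [hi]
        · simp [hk]
      have himem : i ∈ univ.filter fun k => w.sgn k = true := by
        simp [hi]
      have hF1 : 1 ≤ (univ.filter fun k => w.sgn k = true).card :=
        card_pos.mpr ⟨i, himem⟩
      have hperm' : (signEl i * w).perm = 1 := by
        rw [mul_perm, hp]; rfl
      have hμ' : (signEl i * w).perm.support.card * (s + 1)
          + (univ.filter fun k => (signEl i * w).sgn k = true).card
          < n := by
        rw [hperm', hfil, card_erase_of_mem himem]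
        rw [hp] at hμ
        simp only [Equiv.Perm.support_one, card_empty, Nat.zero_mul, zero_add] at hμ ⊢
        omega
      have hmem' := ih _ hμ' (signEl i * w) le_rfl hw'
      have hwre : w = (signEl i)⁻¹ * (signEl i * w) := by group
      rw [hwre]
      exact mul_mem (inv_mem (Subgroup.subset_closure hrS)) hmem'
  · obtain ⟨j, hj⟩ : ∃ j, w.perm j ≠ j := by
      by_contra h; push_neg at h; exact hp (Equiv.ext h)
    set τ := w.perm with hτ
    set i := τ j with hidef
    have hij : i ≠ j := hj
    have hτinv : τ⁻¹ i = j := by rw [hidef, Equiv.Perm.coe_inv, Equiv.symm_apply_apply]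
    have hτi : τ i ≠ i := fun h => hij (τ.injective (h.trans hidef))
    have hcond := congrFun hw i
    rw [HyperOct.smul_apply, ← hτ, hτinv] at hcond
    obtain ⟨r, hrS, hrz, hrperm⟩ :
        ∃ r : HyperOct s, r ∈ S ∧ r • z = z ∧ r.perm = Equiv.swap i j := by
      by_cases hsi : w.sgn i = true
      · rw [if_pos hsi] at hcond
        have hzz : z i * z j = 1 := by rw [← hcond, inv_mul_cancel]
        exact ⟨mixedEl i j, hM i j hij hzz, mixedEl_smul z i j hij hzz, rfl⟩
      · rw [if_neg hsi] at hcond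
        exact ⟨transpEl i j, hT i j hij hcond.symm, transpEl_smul z i j hcond.symm, rfl⟩
    have hw' : (r * w) • z = z := by rw [mul_smul, hw, hrz]
    have hjs : j ∈ τ.support := Equiv.Perm.mem_support.mpr hj
    have hsupp : (r * w).perm.support ⊆ τ.support.erase j := by
      intro k hk
      rw [Equiv.Perm.mem_support, mul_perm, hrperm, ← hτ, Equiv.Perm.mul_apply] at hk
      rw [mem_erase, Equiv.Perm.mem_support]
      constructor
      · rintro rfl
        rw [← hidef, Equiv.swap_apply_left] at hk
        exact hk rfl
      · intro hτk
        apply hk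
        rw [hτk]
        have hki : k ≠ i := fun h => hτi (by rw [← h]; exact hτk)
        have hkj : k ≠ j := fun h => hj (by rw [hidef, ← h]; exact hτk)
        exact Equiv.swap_apply_of_ne_of_ne hki hkj
    have hc1 : 1 ≤ τ.support.card := card_pos.mpr ⟨j, hjs⟩
    have hcard : (r * w).perm.support.card ≤ τ.support.card - 1 :=
      le_trans (card_le_card hsupp) (le_of_eq (card_erase_of_mem hjs))
    have hf : (univ.filter fun k => (r * w).sgn k = true).card ≤ s :=
      le_trans (card_filter_le _ _) (by simp)
    have key : (τ.support.card - 1) * (s + 1) + (s + 1) = τ.support.card * (s + 1) := by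
      have h1 : τ.support.card - 1 + 1 = τ.support.card := Nat.succ_pred_eq_of_pos hc1
      calc (τ.support.card - 1) * (s + 1) + (s + 1)
          = (τ.support.card - 1 + 1) * (s + 1) := by ring
        _ = τ.support.card * (s + 1) := by rw [h1]
    have hB : τ.support.card * (s + 1) ≤ n := le_trans (Nat.le_add_right _ _) hμ
    have hμ' : (r * w).perm.support.card * (s + 1)
        + (univ.filter fun k => (r * w).sgn k = true).card < n := by
      calc (r * w).perm.support.card * (s + 1)
            + (univ.filter fun k => (r * w).sgn k = true).card
          ≤ (τ.support.card - 1) * (s + 1) + s :=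
            add_le_add (Nat.mul_le_mul_right _ hcard) hf
        _ < (τ.support.card - 1) * (s + 1) + (s + 1) := by omega
        _ = τ.support.card * (s + 1) := key
        _ ≤ n := hB
    have hmem' := ih _ hμ' (r * w) le_rfl hw'
    have hwre : w = r⁻¹ * (r * w) := by group
    rw [hwre]
    exact mul_mem (inv_mem (Subgroup.subset_closure hrS)) hmem'

end Aux

open HyperOct in
/-- **Combinatorial core of Theorems 3.26 and 4.14**: the stabilizer of `z ∈ Gˢ`
in the hyperoctahedral group is generated by the reflections it contains: the
transpositions `(1,(i j))` with `z_i = z_j`, the sign changes `(e_i, id)` with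
`z_i² = 1`, and the elements `(e_i e_j, (i j))` with `z_i z_j = 1`. -/
theorem stabilizer_eq_closure_reflections (s : ℕ) (hs : 1 ≤ s)
    (G : Type*) [CommGroup G] (z : Fin s → G) :
    MulAction.stabilizer (HyperOct s) z =
      Subgroup.closure
        ({w | ∃ i j, i ≠ j ∧ z i = z j ∧ w = transpEl i j} ∪
         {w | ∃ i, z i ^ 2 = 1 ∧ w = signEl i} ∪
         {w | ∃ i j, i ≠ j ∧ z i * z j = 1 ∧ w = mixedEl i j}) := by
  apply le_antisymm
  · intro w hw
    rw [MulAction.mem_stabilizer_iff] at hw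
    exact stab_aux z _
      (fun i j hij hz => Or.inl (Or.inl ⟨i, j, hij, hz, rfl⟩))
      (fun i h => Or.inl (Or.inr ⟨i, h, rfl⟩))
      (fun i j hij h => Or.inr ⟨i, j, hij, h, rfl⟩)
      _ w le_rfl hw
  · rw [Subgroup.closure_le]
    rintro w ((⟨i, j, hij, hz, rfl⟩ | ⟨i, hz, rfl⟩) | ⟨i, j, hij, hz, rfl⟩)
    · exact MulAction.mem_stabilizer_iff.mpr (transpEl_smul z i j hz)
    · exact MulAction.mem_stabilizer_iff.mpr (signEl_smul z i hz)
    · exact MulAction.mem_stabilizer_iff.mpr (mixedEl_smul z i j hij hz)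
end

section
/- (Lagrangian counting in the proof of Lemma 5.4): Let q be an odd prime power, let V = F_q^{2r} be equipped with the standard symplectic form ω(x,y) = ∑_{k=1}^{r} (x_k y_{r+k} − x_{r+k} y_k), and call an r-dimensional subspace of V on which ω vanishes identically a Lagrangian. Let L₀ be the Lagrangian spanned by the first r standard basis vectors. Then for every 0 ≤ i ≤ r, the number of Lagrangian subspaces M of V with dim_{F_q}(L₀ ∩ M) = r − i equals q^{i(i+1)/2} · binom(r,i)_q. -/
/-!
Lagrangian counting in the proof of Lemma 5.4: over a finite field of odd cardinality `q`,
the number of Lagrangian subspaces `M` of the standard symplectic space `F_q^{2r}` with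
`dim (L₀ ⊓ M) = r − i` equals `q^{i(i+1)/2} · binom(r,i)_q`.
-/

open Finset

/-- The standard symplectic form `ω(x,y) = ∑_k (x_k y_{r+k} − x_{r+k} y_k)` on
`F^{2r} = (Fin r → F) × (Fin r → F)`. -/
def symplForm (F : Type*) [Field F] (r : ℕ)
    (x y : (Fin r → F) × (Fin r → F)) : F :=
  ∑ k : Fin r, (x.1 k * y.2 k - x.2 k * y.1 k)

/-- A Lagrangian of `F^{2r}`: an `r`-dimensional subspace on which `ω` vanishes. -/
def IsLagrangian (F : Type*) [Field F] (r : ℕ)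
    (M : Submodule F ((Fin r → F) × (Fin r → F))) : Prop :=
  Module.finrank F M = r ∧ ∀ x ∈ M, ∀ y ∈ M, symplForm F r x y = 0

/-- The Lagrangian `L₀` spanned by the first `r` standard basis vectors. -/
def stdLagrangian (F : Type*) [Field F] (r : ℕ) :
    Submodule F ((Fin r → F) × (Fin r → F)) :=
  Submodule.prod ⊤ ⊥

namespace LagHelper

open Module Matrix Submodule LinearMap

variable {F : Type*} [Field F] {r i : ℕ}

lemma symplForm_eq (x y : (Fin r → F) × (Fin r → F)) :
    symplForm F r x y = x.1 ⬝ᵥ y.2 - x.2 ⬝ᵥ y.1 := by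
  simp [symplForm, dotProduct, Finset.sum_sub_distrib]

/-- The symplectic form as a bilinear map. -/
def omL (F : Type*) [Field F] (r : ℕ) :
    ((Fin r → F) × (Fin r → F)) →ₗ[F] ((Fin r → F) × (Fin r → F)) →ₗ[F] F :=
  LinearMap.mk₂ F (symplForm F r)
    (fun x x' y => by simp [symplForm_eq, add_dotProduct, dotProduct_add]; ring)
    (fun c x y => by simp [symplForm_eq, smul_dotProduct, dotProduct_smul]; ring)
    (fun x y y' => by simp [symplForm_eq, add_dotProduct, dotProduct_add]; ring)
    (fun c x y => by simp [symplForm_eq, smul_dotProduct, dotProduct_smul]; ring)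

@[simp] lemma omL_apply (x y : (Fin r → F) × (Fin r → F)) :
    omL F r x y = symplForm F r x y := rfl

/-- Dot product with a fixed vector, as a linear map. -/
def dotL (u : Fin r → F) : (Fin r → F) →ₗ[F] F where
  toFun x := x ⬝ᵥ u
  map_add' x y := add_dotProduct x y u
  map_smul' c x := smul_dotProduct c x u

/-- `x ↦ (x ⬝ s k)_k`. -/
def phi (s : Fin i → Fin r → F) : (Fin r → F) →ₗ[F] (Fin i → F) :=
  LinearMap.pi fun k => dotL (s k)

@[simp] lemma phi_apply (s : Fin i → Fin r → F) (x : Fin r → F) (k : Fin i) :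
    phi s x k = x ⬝ᵥ s k := rfl

lemma phi_surjective {s : Fin i → Fin r → F} (hs : LinearIndependent F s) :
    Function.Surjective (phi s) := by
  rw [← LinearMap.range_eq_top]
  by_contra h
  obtain ⟨f, hf0, hfker⟩ :=
    (LinearMap.range (phi s)).exists_le_ker_of_lt_top (lt_top_iff_ne_top.2 h)
  have key : ∀ x : Fin r → F, f (phi s x) = 0 := fun x =>
    hfker (LinearMap.mem_range_self _ x)
  set a : Fin i → F := fun k => f (fun j => if k = j then 1 else 0) with ha
  have hfx : ∀ x : Fin r → F, ∑ k, a k * (x ⬝ᵥ s k) = 0 := by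
    intro x
    have := key x
    rw [LinearMap.pi_apply_eq_sum_univ f (phi s x)] at this
    simpa [mul_comm, smul_eq_mul, ← ha] using this
  have hzero : (∑ k, a k • s k) = 0 := by
    funext m
    have h1 := hfx (Pi.single m 1)
    have h2 : ∀ k, (Pi.single m 1 : Fin r → F) ⬝ᵥ s k = s k m := by
      intro k
      simp [single_dotProduct, Pi.single_apply, dotProduct,
        Finset.sum_ite_eq, ite_mul]
    simp only [h2] at h1
    simpa [Finset.sum_apply, Pi.smul_apply, smul_eq_mul] using h1
  have : ∀ k, a k = 0 := Fintype.linearIndependent_iff.1 hs a hzero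
  apply hf0
  apply LinearMap.ext
  intro c
  rw [LinearMap.pi_apply_eq_sum_univ f c]
  have : ∀ k, (f fun j => if k = j then 1 else 0) = 0 := fun k => this k
  simp [this]

/-- A "dual family" to an independent family `s`: `dualFam hs j ⬝ᵥ s k = δ_{jk}`. -/
noncomputable def dualFam {s : Fin i → Fin r → F} (hs : LinearIndependent F s) :
    Fin i → (Fin r → F) :=
  fun j => Function.surjInv (phi_surjective hs) (Pi.single j 1)

lemma dualFam_dot {s : Fin i → Fin r → F} (hs : LinearIndependent F s) (j k : Fin i) :
    dualFam hs j ⬝ᵥ s k = if k = j then 1 else 0 := by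
  have h := Function.surjInv_eq (phi_surjective hs) (Pi.single j 1)
  have := congrFun h k
  simpa [dualFam, Pi.single_apply] using this

lemma finrank_ker_phi {s : Fin i → Fin r → F} (hs : LinearIndependent F s) (hi : i ≤ r) :
    finrank F (ker (phi s)) = r - i := by
  have h := LinearMap.finrank_range_add_finrank_ker (phi s)
  rw [LinearMap.range_eq_top.2 (phi_surjective hs), finrank_top] at h
  simp only [Module.finrank_fintype_fun_eq_card, Fintype.card_fin] at h
  omega

/-- Rows of the "x-part" of the generators of the Lagrangian attached to `(s, A)`. -/
noncomputable def xrow {s : Fin i → Fin r → F} (hs : LinearIndependent F s)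
    (A : Matrix (Fin i) (Fin i) F) : Fin i → (Fin r → F) :=
  fun j => ∑ k, A j k • dualFam hs k

lemma xrow_dot {s : Fin i → Fin r → F} (hs : LinearIndependent F s)
    (A : Matrix (Fin i) (Fin i) F) (j k : Fin i) :
    xrow hs A j ⬝ᵥ s k = A j k := by
  have : xrow hs A j ⬝ᵥ s k = ∑ l, A j l * (dualFam hs l ⬝ᵥ s k) := by
    simp [xrow, dotProduct, Finset.sum_mul, Finset.mul_sum]
    rw [Finset.sum_comm]
    simp [mul_assoc]
  rw [this]
  simp [dualFam_dot hs, Finset.sum_ite_eq, mul_ite]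

/-- The generators `(x_j, s_j)`. -/
noncomputable def mvec {s : Fin i → Fin r → F} (hs : LinearIndependent F s)
    (A : Matrix (Fin i) (Fin i) F) : Fin i → ((Fin r → F) × (Fin r → F)) :=
  fun j => (xrow hs A j, s j)

/-- The Lagrangian attached to `(s, A)`. -/
noncomputable def MlagAux {s : Fin i → Fin r → F} (hs : LinearIndependent F s)
    (A : Matrix (Fin i) (Fin i) F) : Submodule F ((Fin r → F) × (Fin r → F)) :=
  (Submodule.prod (ker (phi s)) ⊥) ⊔ Submodule.span F (Set.range (mvec hs A))

lemma mem_MlagAux {s : Fin i → Fin r → F} {hs : LinearIndependent F s}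
    {A : Matrix (Fin i) (Fin i) F} {z : (Fin r → F) × (Fin r → F)} :
    z ∈ MlagAux hs A ↔
      ∃ w ∈ ker (phi s), ∃ c : Fin i → F, z = (w, 0) + ∑ j, c j • mvec hs A j := by
  constructor
  · intro hz
    obtain ⟨a, ha, b, hb, hab⟩ := Submodule.mem_sup.1 hz
    obtain ⟨c, hc⟩ := mem_span_range_iff_exists_fun F |>.1 hb
    refine ⟨a.1, (Submodule.mem_prod.1 ha).1, c, ?_⟩
    have ha2 : a.2 = 0 := (Submodule.mem_prod.1 ha).2
    rw [← hab, ← hc]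
    ext <;> simp [ha2]
  · rintro ⟨w, hw, c, rfl⟩
    refine Submodule.add_mem _ ?_ ?_
    · exact Submodule.mem_sup_left (Submodule.mem_prod.2 ⟨hw, rfl⟩)
    · exact Submodule.mem_sup_right (Submodule.sum_mem _ fun j _ =>
        Submodule.smul_mem _ _ (Submodule.subset_span (Set.mem_range_self j)))

lemma mvec_linearIndependent {s : Fin i → Fin r → F} (hs : LinearIndependent F s)
    (A : Matrix (Fin i) (Fin i) F) : LinearIndependent F (mvec hs A) :=
  LinearIndependent.of_comp (LinearMap.snd F (Fin r → F) (Fin r → F)) (by exact hs)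

lemma coeff_eq_of_sum_eq {s : Fin i → Fin r → F} (hs : LinearIndependent F s)
    {c : Fin i → F} {j : Fin i} (h : ∑ l, c l • s l = s j) :
    c = Pi.single j 1 := by
  have h0 : ∑ l, (fun l => c l - (Pi.single j 1 : Fin i → F) l) l • s l = 0 := by
    simp only [sub_smul, Finset.sum_sub_distrib, h]
    simp [Pi.single_apply, ite_smul, Finset.sum_ite_eq]
  have := Fintype.linearIndependent_iff.1 hs _ h0
  funext l
  have hl := this l
  exact sub_eq_zero.1 hl

lemma dot_eq_of_mem_MlagAux {s : Fin i → Fin r → F} {hs : LinearIndependent F s}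
    {A : Matrix (Fin i) (Fin i) F} {y : Fin r → F} {j : Fin i}
    (h : (y, s j) ∈ MlagAux hs A) (k : Fin i) : y ⬝ᵥ s k = A j k := by
  obtain ⟨w, hw, c, hc⟩ := mem_MlagAux.1 h
  have h2 : s j = ∑ l, c l • s l := by
    have := congrArg Prod.snd hc
    simpa [mvec, Prod.snd_sum, Prod.fst_sum] using this
  have hc1 : c = Pi.single j 1 := coeff_eq_of_sum_eq hs h2.symm
  have h1 : y = w + ∑ l, c l • xrow hs A l := by
    have := congrArg Prod.fst hc
    simpa [mvec, Prod.fst_sum, Prod.snd_sum] using this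
  subst hc1
  have hy : y = w + xrow hs A j := by
    rw [h1]
    congr 1
    simp [Pi.single_apply, ite_smul, Finset.sum_ite_eq]
  rw [hy, add_dotProduct, xrow_dot hs A j k]
  have hw0 : w ⬝ᵥ s k = 0 := by
    have := LinearMap.mem_ker.1 hw
    have := congrFun this k
    simpa using this
  rw [hw0, zero_add]

lemma mvec_mem_MlagAux {s : Fin i → Fin r → F} (hs : LinearIndependent F s)
    (A : Matrix (Fin i) (Fin i) F) (j : Fin i) : mvec hs A j ∈ MlagAux hs A :=
  Submodule.mem_sup_right (Submodule.subset_span (Set.mem_range_self j))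

lemma inf_MlagAux {s : Fin i → Fin r → F} (hs : LinearIndependent F s)
    (A : Matrix (Fin i) (Fin i) F) :
    stdLagrangian F r ⊓ MlagAux hs A = Submodule.prod (ker (phi s)) ⊥ := by
  apply le_antisymm
  · rintro ⟨z1, z2⟩ ⟨hzL, hzM⟩
    have hz2 : z2 = 0 := (Submodule.mem_prod.1 hzL).2
    obtain ⟨w, hw, c, hc⟩ := mem_MlagAux.1 hzM
    have h2 : z2 = ∑ l, c l • s l := by
      have := congrArg Prod.snd hc
      simpa [mvec, Prod.snd_sum, Prod.fst_sum] using this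
    have hc0 : ∀ l, c l = 0 := by
      refine Fintype.linearIndependent_iff.1 hs c ?_
      rw [← h2, hz2]
    have h1 : z1 = w := by
      have := congrArg Prod.fst hc
      simp only [mvec, Prod.fst_add, Prod.fst_sum, Prod.smul_mk] at this
      simpa [hc0] using this
    exact Submodule.mem_prod.2 ⟨h1 ▸ hw, by simp [hz2]⟩
  · intro z hz
    refine ⟨Submodule.mem_prod.2 ⟨Submodule.mem_top, (Submodule.mem_prod.1 hz).2⟩,
      Submodule.mem_sup_left hz⟩

lemma finrank_prod_ker {s : Fin i → Fin r → F} (hs : LinearIndependent F s) (hi : i ≤ r) :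
    finrank F (Submodule.prod (ker (phi s)) ⊥ :
      Submodule F ((Fin r → F) × (Fin r → F))) = r - i := by
  have h1 : finrank F (ker (phi s)) =
      finrank F ((ker (phi s)).map (LinearMap.inl F (Fin r → F) (Fin r → F))) :=
    LinearEquiv.finrank_eq
      (Submodule.equivMapOfInjective _ LinearMap.inl_injective (ker (phi s)))
  rw [Submodule.map_inl] at h1
  rw [← h1]
  exact finrank_ker_phi hs hi

lemma disjoint_MlagAux {s : Fin i → Fin r → F} (hs : LinearIndependent F s)
    (A : Matrix (Fin i) (Fin i) F) :
    Submodule.prod (ker (phi s)) ⊥ ⊓ Submodule.span F (Set.range (mvec hs A)) = ⊥ := by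
  rw [eq_bot_iff]
  rintro ⟨z1, z2⟩ ⟨hzp, hzs⟩
  obtain ⟨c, hc⟩ := mem_span_range_iff_exists_fun F |>.1 hzs
  have hz2 : z2 = 0 := (Submodule.mem_prod.1 hzp).2
  have h2 : z2 = ∑ l, c l • s l := by
    have := congrArg Prod.snd hc
    simpa [mvec, Prod.snd_sum, Prod.fst_sum] using this.symm
  have hc0 : ∀ l, c l = 0 := by
    refine Fintype.linearIndependent_iff.1 hs c ?_
    rw [← h2, hz2]
  have h1 : z1 = 0 := by
    have := congrArg Prod.fst hc
    simp only [mvec, Prod.fst_sum, Prod.smul_mk] at this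
    simp [hc0] at this
    exact this.symm
  simp [Submodule.mem_bot, Prod.ext_iff, h1, hz2]

lemma finrank_MlagAux {s : Fin i → Fin r → F} (hs : LinearIndependent F s)
    (A : Matrix (Fin i) (Fin i) F) (hi : i ≤ r) :
    finrank F (MlagAux hs A) = r := by
  have h := Submodule.finrank_sup_add_finrank_inf_eq
    (Submodule.prod (ker (phi s)) ⊥) (Submodule.span F (Set.range (mvec hs A)))
  rw [disjoint_MlagAux hs A] at h
  have hspan : finrank F (Submodule.span F (Set.range (mvec hs A))) = i := by
    rw [finrank_span_eq_card (mvec_linearIndependent hs A), Fintype.card_fin]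
  rw [finrank_prod_ker hs hi, hspan] at h
  have : finrank F (⊥ : Submodule F ((Fin r → F) × (Fin r → F))) = 0 := finrank_bot F _
  rw [this] at h
  unfold MlagAux
  omega

lemma map_snd_MlagAux {s : Fin i → Fin r → F} (hs : LinearIndependent F s)
    (A : Matrix (Fin i) (Fin i) F) :
    (MlagAux hs A).map (LinearMap.snd F (Fin r → F) (Fin r → F)) =
      Submodule.span F (Set.range s) := by
  unfold MlagAux
  rw [Submodule.map_sup, Submodule.map_span, ← Set.range_comp]
  have h1 : (Submodule.prod (ker (phi s)) ⊥).map
      (LinearMap.snd F (Fin r → F) (Fin r → F)) = ⊥ := by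
    rw [eq_bot_iff]
    rintro x ⟨⟨z1, z2⟩, hz, rfl⟩
    exact (Submodule.mem_prod.1 hz).2
  have h2 : ((LinearMap.snd F (Fin r → F) (Fin r → F)) ∘ mvec hs A) = s := rfl
  rw [h1, h2, bot_sup_eq]

lemma MlagAux_eq_span {s : Fin i → Fin r → F} (hs : LinearIndependent F s)
    (A : Matrix (Fin i) (Fin i) F) :
    MlagAux hs A = Submodule.span F
      ((Submodule.prod (ker (phi s)) ⊥ :
        Submodule F ((Fin r → F) × (Fin r → F))) ∪ Set.range (mvec hs A)) := by
  rw [Submodule.span_union, Submodule.span_eq]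
  rfl

lemma gen_isotropic {s : Fin i → Fin r → F} (hs : LinearIndependent F s)
    {A : Matrix (Fin i) (Fin i) F} (hA : A.IsSymm) :
    ∀ x ∈ ((Submodule.prod (ker (phi s)) ⊥ :
        Submodule F ((Fin r → F) × (Fin r → F))) : Set _) ∪ Set.range (mvec hs A),
      ∀ y ∈ ((Submodule.prod (ker (phi s)) ⊥ :
        Submodule F ((Fin r → F) × (Fin r → F))) : Set _) ∪ Set.range (mvec hs A),
      symplForm F r x y = 0 := by
  have hker : ∀ w : Fin r → F, w ∈ ker (phi s) → ∀ k, w ⬝ᵥ s k = 0 := by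
    intro w hw k
    have := congrFun (LinearMap.mem_ker.1 hw) k
    simpa using this
  rintro x (hx | ⟨j, rfl⟩) y (hy | ⟨k, rfl⟩)
  · have hx2 : x.2 = 0 := (Submodule.mem_prod.1 hx).2
    have hy2 : y.2 = 0 := (Submodule.mem_prod.1 hy).2
    simp [symplForm_eq, hx2, hy2]
  · have hx2 : x.2 = 0 := (Submodule.mem_prod.1 hx).2
    have hx1 : x.1 ∈ ker (phi s) := (Submodule.mem_prod.1 hx).1
    simp [symplForm_eq, mvec, hx2, hker x.1 hx1 k]
  · have hy2 : y.2 = 0 := (Submodule.mem_prod.1 hy).2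
    have hy1 : y.1 ∈ ker (phi s) := (Submodule.mem_prod.1 hy).1
    simp [symplForm_eq, mvec, hy2, dotProduct_comm, hker y.1 hy1 j]
  · simp only [symplForm_eq, mvec]
    rw [xrow_dot hs A j k, dotProduct_comm, xrow_dot hs A k j]
    rw [← hA.apply j k, sub_self]

lemma MlagAux_isotropic {s : Fin i → Fin r → F} (hs : LinearIndependent F s)
    {A : Matrix (Fin i) (Fin i) F} (hA : A.IsSymm) :
    ∀ x ∈ MlagAux hs A, ∀ y ∈ MlagAux hs A, symplForm F r x y = 0 := by
  set G : Set ((Fin r → F) × (Fin r → F)) :=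
    ((Submodule.prod (ker (phi s)) ⊥ :
        Submodule F ((Fin r → F) × (Fin r → F))) : Set _) ∪ Set.range (mvec hs A) with hG
  have hgen := gen_isotropic hs hA
  have h1 : ∀ g ∈ G, ∀ y ∈ MlagAux hs A, symplForm F r g y = 0 := by
    intro g hg y hy
    have : MlagAux hs A ≤ LinearMap.ker (omL F r g) := by
      rw [MlagAux_eq_span hs A, Submodule.span_le]
      intro z hz
      exact LinearMap.mem_ker.2 (hgen g hg z hz)
    exact LinearMap.mem_ker.1 (this hy)
  intro x hx y hy
  have : MlagAux hs A ≤ LinearMap.ker ((omL F r).flip y) := by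
    rw [MlagAux_eq_span hs A, Submodule.span_le]
    intro g hg
    exact LinearMap.mem_ker.2 (h1 g hg y hy)
  exact LinearMap.mem_ker.1 (this hx)

lemma MlagAux_isLagrangian {s : Fin i → Fin r → F} (hs : LinearIndependent F s)
    {A : Matrix (Fin i) (Fin i) F} (hA : A.IsSymm) (hi : i ≤ r) :
    IsLagrangian F r (MlagAux hs A) ∧
      finrank F ↥(stdLagrangian F r ⊓ MlagAux hs A) = r - i := by
  refine ⟨⟨finrank_MlagAux hs A hi, MlagAux_isotropic hs hA⟩, ?_⟩
  rw [inf_MlagAux hs A]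
  exact finrank_prod_ker hs hi

lemma finrank_map_snd {M : Submodule F ((Fin r → F) × (Fin r → F))}
    (hM : IsLagrangian F r M)
    (hd : finrank F ↥(stdLagrangian F r ⊓ M) = r - i) (hi : i ≤ r) :
    finrank F ↥(M.map (LinearMap.snd F (Fin r → F) (Fin r → F))) = i := by
  set f := (LinearMap.snd F (Fin r → F) (Fin r → F)).comp M.subtype with hf
  have hrange : LinearMap.range f = M.map (LinearMap.snd F (Fin r → F) (Fin r → F)) := by
    rw [hf, LinearMap.range_comp, Submodule.range_subtype]
  have hker : LinearMap.ker f = (stdLagrangian F r).comap M.subtype := by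
    ext x
    simp [hf, stdLagrangian, Submodule.mem_prod]
  have hker2 : finrank F (LinearMap.ker f) = r - i := by
    rw [hker]
    have : (stdLagrangian F r).comap M.subtype =
        (stdLagrangian F r ⊓ M).comap M.subtype := by
      ext x
      simp [Submodule.mem_comap, x.2]
    rw [this]
    rw [LinearEquiv.finrank_eq (Submodule.comapSubtypeEquivOfLe inf_le_right)]
    exact hd
  have h := LinearMap.finrank_range_add_finrank_ker f
  rw [hrange, hker2, hM.1] at h
  omega

lemma exists_A_of_lagrangian {M : Submodule F ((Fin r → F) × (Fin r → F))}
    (hM : IsLagrangian F r M)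
    (hd : finrank F ↥(stdLagrangian F r ⊓ M) = r - i) (hi : i ≤ r)
    {s : Fin i → Fin r → F} (hs : LinearIndependent F s)
    (hspan : Submodule.span F (Set.range s) =
      M.map (LinearMap.snd F (Fin r → F) (Fin r → F))) :
    ∃ A : Matrix (Fin i) (Fin i) F, A.IsSymm ∧ MlagAux hs A = M := by
  -- choose preimages m j ∈ M with (m j).2 = s j
  have hmem : ∀ j, ∃ m : (Fin r → F) × (Fin r → F), m ∈ M ∧ m.2 = s j := by
    intro j
    have : s j ∈ M.map (LinearMap.snd F (Fin r → F) (Fin r → F)) := by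
      rw [← hspan]; exact Submodule.subset_span (Set.mem_range_self j)
    obtain ⟨m, hm, hm2⟩ := this
    exact ⟨m, hm, hm2⟩
  choose m hmM hm2 using hmem
  -- every (y,0) ∈ M is dot-orthogonal to all s k
  have horth : ∀ y : Fin r → F, (y, (0 : Fin r → F)) ∈ M → ∀ k, y ⬝ᵥ s k = 0 := by
    intro y hy k
    have := hM.2 _ hy _ (hmM k)
    rw [symplForm_eq] at this
    simpa [hm2 k] using this
  -- hence stdLagrangian ⊓ M = ker(phi s).prod ⊥, so ker(phi s).prod ⊥ ≤ M
  have hinf : stdLagrangian F r ⊓ M = Submodule.prod (ker (phi s)) ⊥ := by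
    apply Submodule.eq_of_le_of_finrank_eq
    · rintro ⟨z1, z2⟩ ⟨hzL, hzM⟩
      have hz2 : z2 = 0 := (Submodule.mem_prod.1 hzL).2
      subst hz2
      refine Submodule.mem_prod.2 ⟨?_, rfl⟩
      rw [LinearMap.mem_ker]
      funext k
      simpa using horth z1 hzM k
    · rw [hd, finrank_prod_ker hs hi]
  have hprodM : Submodule.prod (ker (phi s)) ⊥ ≤ M := by
    rw [← hinf]; exact inf_le_right
  -- define A
  set A : Matrix (Fin i) (Fin i) F := Matrix.of fun j k => (m j).1 ⬝ᵥ s k with hA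
  have hAsymm : A.IsSymm := by
    apply Matrix.IsSymm.ext
    intro j k
    -- A j k = A k j ?  IsSymm.ext wants: ∀ i j, A j i = A i j maybe; compute with symplForm
    have := hM.2 _ (hmM k) _ (hmM j)
    rw [symplForm_eq] at this
    have h2 : (m k).1 ⬝ᵥ s j - (m j).1 ⬝ᵥ s k = 0 := by
      rw [hm2 j, hm2 k, dotProduct_comm (s k)] at this
      exact this
    have : (m k).1 ⬝ᵥ s j = (m j).1 ⬝ᵥ s k := by linear_combination h2
    simpa [hA] using this
  refine ⟨A, hAsymm, ?_⟩
  apply Submodule.eq_of_le_of_finrank_eq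
  · -- MlagAux ≤ M
    apply sup_le hprodM
    rw [Submodule.span_le]
    rintro z ⟨j, rfl⟩
    have hdiff : ((xrow hs A j - (m j).1, (0 : Fin r → F))) ∈ M := by
      apply hprodM
      refine Submodule.mem_prod.2 ⟨?_, rfl⟩
      rw [LinearMap.mem_ker]
      funext k
      have : (xrow hs A j - (m j).1) ⬝ᵥ s k = 0 := by
        rw [sub_dotProduct, xrow_dot hs A j k]
        simp [hA]
      simpa using this
    have : mvec hs A j = (xrow hs A j - (m j).1, (0 : Fin r → F)) + m j := by
      ext <;> simp [mvec, hm2 j]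
    rw [this]
    exact Submodule.add_mem M hdiff (hmM j)
  · rw [finrank_MlagAux hs A hi, hM.1]

/-- Symmetric matrices correspond to functions on pairs `p.2 ≤ p.1`. -/
def symmMatrixEquiv (i : ℕ) (F : Type*) [Field F] :
    {A : Matrix (Fin i) (Fin i) F // A.IsSymm} ≃
      ({p : Fin i × Fin i // p.2 ≤ p.1} → F) where
  toFun A := fun p => A.1 p.1.1 p.1.2
  invFun f := ⟨Matrix.of fun j k =>
      if h : k ≤ j then f ⟨(j, k), h⟩ else f ⟨(k, j), le_of_not_ge h⟩, by
    apply Matrix.IsSymm.ext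
    intro j k
    by_cases h : k ≤ j
    · by_cases h' : j ≤ k
      · have : j = k := le_antisymm h' h
        subst this
        simp
      · simp [Matrix.of_apply, dif_pos h, dif_neg h']
    · have h' : j ≤ k := le_of_not_ge h
      simp [Matrix.of_apply, dif_pos h', dif_neg h]⟩
  left_inv A := by
    apply Subtype.ext
    ext j k
    show (if h : k ≤ j then A.1 j k else A.1 k j) = A.1 j k
    by_cases h : k ≤ j
    · rw [dif_pos h]
    · rw [dif_neg h]
      exact (A.2.apply k j).symm
  right_inv f := by
    funext p
    obtain ⟨⟨a, b⟩, hab⟩ := p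
    simp [dif_pos hab]

lemma card_le_pairs (i : ℕ) :
    Nat.card {p : Fin i × Fin i // p.2 ≤ p.1} = i * (i + 1) / 2 := by
  rw [Nat.card_eq_fintype_card]
  rw [Fintype.card_congr (Equiv.subtypeProdEquivSigmaSubtype (fun (a b : Fin i) => b ≤ a))]
  rw [Fintype.card_sigma]
  have hIic : ∀ a : Fin i, Fintype.card {b : Fin i // b ≤ a} = (a : ℕ) + 1 := by
    intro a
    rw [Fintype.card_subtype]
    have : Finset.filter (fun b => b ≤ a) Finset.univ = Finset.Iic a := by
      ext b; simp
    rw [this, Fin.card_Iic]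
  simp only [hIic]
  have h1 : ∑ a : Fin i, ((a : ℕ) + 1) = (∑ k ∈ Finset.range i, k) + i := by
    rw [Fin.sum_univ_eq_sum_range (fun k => k + 1), Finset.sum_add_distrib]
    simp
  have h2 := Finset.sum_range_id_mul_two i
  have h3 : (∑ a : Fin i, ((a : ℕ) + 1)) * 2 = i * (i + 1) := by
    rw [h1, add_mul, h2]
    cases i with
    | zero => simp
    | succ n =>
      simp only [Nat.succ_sub_one]
      ring
  rw [← h3]
  simp

lemma card_symm_matrices (i : ℕ) (F : Type*) [Field F] [Fintype F] :
    Nat.card {A : Matrix (Fin i) (Fin i) F // A.IsSymm} =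
      Fintype.card F ^ (i * (i + 1) / 2) := by
  rw [Nat.card_congr (symmMatrixEquiv i F)]
  rw [Nat.card_eq_fintype_card, Fintype.card_fun]
  rw [← card_le_pairs i, Nat.card_eq_fintype_card]

/-- Families spanning `U` correspond to families in `U`. -/
def fiberEquiv (U : Submodule F (Fin r → F)) (hU : finrank F U = i) :
    {s : Fin i → Fin r → F // LinearIndependent F s ∧
        Submodule.span F (Set.range s) = U} ≃
      {t : Fin i → U // LinearIndependent F t} where
  toFun s := ⟨fun j => ⟨s.1 j, by
      have h := Submodule.subset_span (R := F) (Set.mem_range_self (f := s.1) j)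
      rwa [s.2.2] at h⟩,
    LinearIndependent.of_comp U.subtype (by exact s.2.1)⟩
  invFun t := ⟨fun j => (t.1 j : Fin r → F), t.2.map' U.subtype (Submodule.ker_subtype U), by
    have h1 : Set.range (fun j => (t.1 j : Fin r → F)) = U.subtype '' Set.range t.1 := by
      rw [← Set.range_comp]; rfl
    rw [h1, ← Submodule.map_span]
    have h2 : Submodule.span F (Set.range t.1) = ⊤ := by
      apply Submodule.eq_of_le_of_finrank_eq le_top
      rw [finrank_span_eq_card t.2, Fintype.card_fin, finrank_top, hU]
    rw [h2, Submodule.map_top, Submodule.range_subtype]⟩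
  left_inv s := Subtype.ext rfl
  right_inv t := Subtype.ext (funext fun j => Subtype.ext rfl)

section FintypeF

variable [Fintype F]

lemma card_fiber (U : Submodule F (Fin r → F)) (hU : finrank F U = i) :
    Nat.card {s : Fin i → Fin r → F // LinearIndependent F s ∧
        Submodule.span F (Set.range s) = U} =
      ∏ k : Fin i, (Fintype.card F ^ i - Fintype.card F ^ (k : ℕ)) := by
  rw [Nat.card_congr (fiberEquiv U hU)]
  have h := card_linearIndependent (K := F) (V := U) (k := i) (le_of_eq hU.symm)
  rw [h, hU]

/-- The big parametrization map. -/
noncomputable def bigMap (hi : i ≤ r)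
    (p : {s : Fin i → Fin r → F // LinearIndependent F s} ×
      {A : Matrix (Fin i) (Fin i) F // A.IsSymm}) :
    Σ M : {M : Submodule F ((Fin r → F) × (Fin r → F)) //
        IsLagrangian F r M ∧ finrank F ↥(stdLagrangian F r ⊓ M) = r - i},
      {s : Fin i → Fin r → F // LinearIndependent F s ∧
        Submodule.span F (Set.range s) =
          M.1.map (LinearMap.snd F (Fin r → F) (Fin r → F))} :=
  ⟨⟨MlagAux p.1.2 p.2.1, MlagAux_isLagrangian p.1.2 p.2.2 hi⟩,
    ⟨p.1.1, p.1.2, (map_snd_MlagAux p.1.2 p.2.1).symm⟩⟩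

lemma bigMap_injective (hi : i ≤ r) :
    Function.Injective (bigMap (F := F) (r := r) (i := i) hi) := by
  rintro ⟨⟨s, hs⟩, ⟨A, hA⟩⟩ ⟨⟨s', hs'⟩, ⟨A', hA'⟩⟩ h
  have hM : MlagAux hs A = MlagAux hs' A' := by
    have := congrArg (fun x => x.1.1) h
    simpa [bigMap] using this
  have h2 := (Sigma.ext_iff.1 h).2
  have hss : s = s' := by
    refine (Subtype.heq_iff_coe_eq ?_).1 h2
    intro x
    simp only [bigMap]
    rw [hM]
  subst hss
  have hAA : A = A' := by
    ext j k
    have h1 : (xrow hs A j, s j) ∈ MlagAux hs' A' := by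
      rw [← hM]; exact mvec_mem_MlagAux hs A j
    have := dot_eq_of_mem_MlagAux (hs := hs') (A := A') h1 k
    rw [← this, xrow_dot hs A j k]
  subst hAA
  rfl

lemma bigMap_surjective (hi : i ≤ r) :
    Function.Surjective (bigMap (F := F) (r := r) (i := i) hi) := by
  rintro ⟨⟨M, hM, hd⟩, ⟨s, hs, hspan⟩⟩
  obtain ⟨A, hA, hMA⟩ := exists_A_of_lagrangian hM hd hi hs hspan
  refine ⟨⟨⟨s, hs⟩, ⟨A, hA⟩⟩, ?_⟩
  refine Sigma.ext (Subtype.ext (by simpa [bigMap] using hMA)) ?_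
  refine (Subtype.heq_iff_coe_eq ?_).2 rfl
  intro x
  simp only [bigMap]
  rw [hMA]

lemma key_count (hi : i ≤ r) :
    Nat.card ({s : Fin i → Fin r → F // LinearIndependent F s} ×
        {A : Matrix (Fin i) (Fin i) F // A.IsSymm}) =
      Nat.card {M : Submodule F ((Fin r → F) × (Fin r → F)) //
          IsLagrangian F r M ∧ finrank F ↥(stdLagrangian F r ⊓ M) = r - i} *
        ∏ k : Fin i, (Fintype.card F ^ i - Fintype.card F ^ (k : ℕ)) := by
  classical
  haveI : Finite (Submodule F ((Fin r → F) × (Fin r → F))) :=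
    Finite.of_injective (fun M => (M : Set ((Fin r → F) × (Fin r → F))))
      SetLike.coe_injective
  haveI : Fintype (Submodule F ((Fin r → F) × (Fin r → F))) := Fintype.ofFinite _
  rw [Nat.card_eq_of_bijective (bigMap hi) ⟨bigMap_injective hi, bigMap_surjective hi⟩]
  rw [Nat.card_eq_fintype_card, Fintype.card_sigma]
  have hfib : ∀ M : {M : Submodule F ((Fin r → F) × (Fin r → F)) //
      IsLagrangian F r M ∧ finrank F ↥(stdLagrangian F r ⊓ M) = r - i},
      Fintype.card {s : Fin i → Fin r → F // LinearIndependent F s ∧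
        Submodule.span F (Set.range s) =
          M.1.map (LinearMap.snd F (Fin r → F) (Fin r → F))} =
      ∏ k : Fin i, (Fintype.card F ^ i - Fintype.card F ^ (k : ℕ)) := by
    intro M
    rw [← Nat.card_eq_fintype_card]
    exact card_fiber _ (finrank_map_snd M.2.1 M.2.2 hi)
  rw [Finset.sum_congr rfl (fun M _ => hfib M), Finset.sum_const, Finset.card_univ,
    smul_eq_mul, Nat.card_eq_fintype_card]

end FintypeF

end LagHelper

/-- **Lagrangian counting (Lemma 5.4)**: for `q` an odd prime power (here the
cardinality of a finite field `F`) and `0 ≤ i ≤ r`, the number of Lagrangians `M` with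
`dim (L₀ ⊓ M) = r − i` equals `q^{i(i+1)/2} · ∏_{k=0}^{i−1} (q^{r−k} − 1)/(q^{i−k} − 1)`. -/
theorem lagrangian_count (F : Type*) [Field F] [Fintype F]
    (hodd : Odd (Fintype.card F)) (r i : ℕ) (hi : i ≤ r) :
    (Nat.card {M : Submodule F ((Fin r → F) × (Fin r → F)) //
        IsLagrangian F r M ∧ Module.finrank F ↥(stdLagrangian F r ⊓ M) = r - i} : ℚ)
      = (Fintype.card F : ℚ) ^ (i * (i + 1) / 2) *
        ∏ k ∈ Finset.range i,
          ((Fintype.card F : ℚ) ^ (r - k) - 1) / ((Fintype.card F : ℚ) ^ (i - k) - 1) := by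
  classical
  set q : ℕ := Fintype.card F with hq
  have hq1 : 1 < q := Fintype.one_lt_card
  have key := LagHelper.key_count (F := F) (r := r) (i := i) hi
  rw [Nat.card_prod] at key
  have hLI : Nat.card {s : Fin i → Fin r → F // LinearIndependent F s} =
      ∏ k : Fin i, (q ^ r - q ^ (k : ℕ)) := by
    have h := card_linearIndependent (K := F) (V := Fin r → F) (k := i)
      (by simpa using hi)
    simpa using h
  rw [hLI, LagHelper.card_symm_matrices] at key
  -- now key : (∏ k : Fin i, (q^r - q^k)) * q^(i*(i+1)/2) = N * ∏ k : Fin i, (q^i - q^k)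
  set Q : ℚ := (q : ℚ) with hQ
  have hQ1 : (1 : ℚ) < Q := by rw [hQ]; exact_mod_cast hq1
  have hQ0 : (0 : ℚ) < Q := lt_trans one_pos hQ1
  have hcast : ∀ (n : ℕ), i ≤ n →
      ((∏ k : Fin i, (q ^ n - q ^ (k : ℕ)) : ℕ) : ℚ) =
        ∏ k ∈ Finset.range i, (Q ^ n - Q ^ k) := by
    intro n hn
    rw [Nat.cast_prod]
    rw [Fin.prod_univ_eq_prod_range (fun k => ((q ^ n - q ^ k : ℕ) : ℚ)) i]
    refine Finset.prod_congr rfl fun k hk => ?_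
    have hkn : q ^ k ≤ q ^ n :=
      Nat.pow_le_pow_right (le_of_lt hq1)
        (le_trans (le_of_lt (Finset.mem_range.1 hk)) hn)
    push_cast [Nat.cast_sub hkn]
    rfl
  have keyQ : (∏ k ∈ Finset.range i, (Q ^ r - Q ^ k)) * Q ^ (i * (i + 1) / 2) =
      (Nat.card {M : Submodule F ((Fin r → F) × (Fin r → F)) //
        IsLagrangian F r M ∧ Module.finrank F ↥(stdLagrangian F r ⊓ M) = r - i} : ℚ) *
      ∏ k ∈ Finset.range i, (Q ^ i - Q ^ k) := by
    have := congrArg (fun n : ℕ => (n : ℚ)) key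
    push_cast at this
    rw [← hcast r hi, ← hcast i le_rfl]
    push_cast
    exact this
  have hfac : ∀ k ∈ Finset.range i,
      (Q ^ (r - k) - 1) / (Q ^ (i - k) - 1) * (Q ^ i - Q ^ k) = Q ^ r - Q ^ k := by
    intro k hk
    have hki : k < i := Finset.mem_range.1 hk
    have hkr : k ≤ r := le_trans (le_of_lt hki) hi
    have e1 : Q ^ i - Q ^ k = Q ^ k * (Q ^ (i - k) - 1) := by
      rw [mul_sub, mul_one, ← pow_add]
      congr 2
      omega
    have e2 : Q ^ r - Q ^ k = Q ^ k * (Q ^ (r - k) - 1) := by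
      rw [mul_sub, mul_one, ← pow_add]
      congr 2
      omega
    have hne : Q ^ (i - k) - 1 ≠ 0 := by
      have : (1 : ℚ) < Q ^ (i - k) := one_lt_pow₀ hQ1 (by omega)
      intro hcontra
      rw [sub_eq_zero] at hcontra
      rw [← hcontra] at this
      exact lt_irrefl _ this
    rw [e1, e2]
    field_simp
  have hD : (∏ k ∈ Finset.range i, (Q ^ i - Q ^ k)) ≠ 0 := by
    apply Finset.prod_ne_zero_iff.2
    intro k hk
    have hki : k < i := Finset.mem_range.1 hk
    have : Q ^ k < Q ^ i := pow_lt_pow_right₀ hQ1 hki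
    exact sub_ne_zero.2 (ne_of_gt this)
  apply mul_right_cancel₀ hD
  rw [← keyQ]
  rw [mul_assoc, Finset.prod_mul_distrib.symm]
  rw [Finset.prod_congr rfl hfac]
  ring
end

section
/- (Identity (eq:c+′), the evaluation of the product C^{+′}_{w′_r}(s) = ∏_{α>0, w′_r α<0} c′_α(σ□_s) in the proof of Proposition 4.6): For every integer r ≥ 1, the identity ∏_{1≤i<j≤r} (1 − X^{2r+2−i−j}Y²)/(1 − X^{2r+1−i−j}Y²) · ∏_{i=1}^{r} [ X^{r+1−i} Y (1 − X^{r+1−i}Y)(1 + X^{r−i}Y) / (1 − X^{2r+1−2i}Y²) ] = X^{r(r+1)/2} Y^{r} · (1+Y)/(1+X^{r}Y) · ∏_{i=1}^{r} (1 − X^{r+i}Y²)/(1 − X^{2i−1}Y²) holds in ℚ(X,Y). -/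
/-!
Identity (eq:c+′): the evaluation of `C^{+′}_{w′_r}(s) = ∏_{α>0, w′_r α<0} c′_α(σ□_s)`
in the proof of Proposition 4.6, as an identity in `ℚ(X,Y)` (with `X = q⁻¹`, `Y = q⁻ˢ`).
-/

open Finset

/-- The field `ℚ(X,Y)` of rational functions in two indeterminates. -/
abbrev RF2 : Type := FractionRing (MvPolynomial (Fin 2) ℚ)

/-- The indeterminate `X`. -/
noncomputable def Xv : RF2 :=
  algebraMap (MvPolynomial (Fin 2) ℚ) RF2 (MvPolynomial.X 0)

/-- The indeterminate `Y`. -/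
noncomputable def Yv : RF2 :=
  algebraMap (MvPolynomial (Fin 2) ℚ) RF2 (MvPolynomial.X 1)

noncomputable def fE (k : ℕ) : RF2 := 1 - Xv ^ k * Yv ^ 2
noncomputable def gE (k : ℕ) : RF2 := 1 - Xv ^ k * Yv
noncomputable def hE (k : ℕ) : RF2 := 1 + Xv ^ k * Yv

lemma algebraMap_ne_zero' (v : Fin 2 → ℚ) (p : MvPolynomial (Fin 2) ℚ)
    (hp : MvPolynomial.eval v p ≠ 0) :
    algebraMap (MvPolynomial (Fin 2) ℚ) RF2 p ≠ 0 := by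
  intro h
  exact hp (by rw [(IsFractionRing.to_map_eq_zero_iff).mp h, map_zero])

lemma fE_ne (k : ℕ) : fE k ≠ 0 := by
  have h : fE k = algebraMap (MvPolynomial (Fin 2) ℚ) RF2
      (1 - MvPolynomial.X 0 ^ k * MvPolynomial.X 1 ^ 2) := by
    simp [fE, Xv, Yv, map_sub, map_mul, map_pow, map_one]
  rw [h]
  apply algebraMap_ne_zero' (fun _ => 0)
  simp

lemma hE_ne (k : ℕ) : hE k ≠ 0 := by
  have h : hE k = algebraMap (MvPolynomial (Fin 2) ℚ) RF2
      (1 + MvPolynomial.X 0 ^ k * MvPolynomial.X 1) := by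
    simp [hE, Xv, Yv, map_add, map_mul, map_pow, map_one]
  rw [h]
  apply algebraMap_ne_zero' (fun _ => 0)
  simp

lemma tele (F : ℕ → RF2) (hF : ∀ t, F t ≠ 0) (m : ℕ) :
    ∏ t ∈ range m, F t / F (t + 1) = F 0 / F m := by
  induction m with
  | zero => simp [div_self (hF 0)]
  | succ n ih =>
      rw [prod_range_succ, ih, div_mul_div_comm, mul_comm (F 0) (F n),
        mul_div_mul_left _ _ (hF n)]

lemma gh (k : ℕ) : gE (k + 1) * hE (k + 1) = fE (2 * k + 2) := by
  have hx : Xv ^ (2 * k + 2) = (Xv ^ (k + 1)) ^ 2 := by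
    rw [← pow_mul]; congr 1; omega
  unfold gE hE fE
  rw [hx]; ring

lemma hg_prod (r : ℕ) :
    ∏ t ∈ range r, hE t * gE (t + 1) = hE 0 / hE r * ∏ t ∈ range r, fE (2 * t + 2) := by
  induction r with
  | zero => simp [div_self (hE_ne 0)]
  | succ n ih =>
      rw [prod_range_succ, ih, prod_range_succ, ← gh n]
      have h1 := hE_ne n
      have h2 := hE_ne (n + 1)
      field_simp

lemma pair_prod (r : ℕ) :
    (∏ t ∈ range r, fE (2 * t + 1)) * ∏ t ∈ range r, fE (2 * t + 2)
      = ∏ t ∈ range (2 * r), fE (t + 1) := by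
  induction r with
  | zero => simp
  | succ n ih =>
      rw [prod_range_succ, prod_range_succ,
        show 2 * (n + 1) = (2 * n + 1) + 1 by omega, prod_range_succ, prod_range_succ, ← ih]
      have e1 : 2 * n + 1 + 1 = 2 * n + 2 := by omega
      rw [e1]
      ring

lemma split_prod (r : ℕ) :
    ∏ t ∈ range (2 * r), fE (t + 1)
      = (∏ t ∈ range r, fE (t + 1)) * ∏ t ∈ range r, fE (r + 1 + t) := by
  rw [two_mul, prod_range_add]
  congr 1
  exact prod_congr rfl fun t _ => by congr 1; omega

/-- **Identity (eq:c+′)**: for every `r ≥ 1`,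
`∏_{1≤i<j≤r} (1 − X^{2r+2−i−j}Y²)/(1 − X^{2r+1−i−j}Y²)
 · ∏_{i=1}^{r} X^{r+1−i} Y (1 − X^{r+1−i}Y)(1 + X^{r−i}Y)/(1 − X^{2r+1−2i}Y²)
 = X^{r(r+1)/2} Y^r (1+Y)/(1+X^r Y) · ∏_{i=1}^{r} (1 − X^{r+i}Y²)/(1 − X^{2i−1}Y²)`
in `ℚ(X,Y)`.  (Below, indices are shifted to be 0-based: `i,j ↦ i+1,j+1`.) -/
theorem c_plus_prime_identity (r : ℕ) (hr : 1 ≤ r) :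
    (∏ i ∈ Finset.range r, ∏ j ∈ Finset.Ioo i r,
        (1 - Xv ^ (2 * (r : ℤ) - (i : ℤ) - (j : ℤ)) * Yv ^ 2) /
          (1 - Xv ^ (2 * (r : ℤ) - 1 - (i : ℤ) - (j : ℤ)) * Yv ^ 2)) *
      (∏ i ∈ Finset.range r,
        Xv ^ ((r : ℤ) - (i : ℤ)) * Yv * (1 - Xv ^ ((r : ℤ) - (i : ℤ)) * Yv) *
            (1 + Xv ^ ((r : ℤ) - 1 - (i : ℤ)) * Yv) /
          (1 - Xv ^ (2 * (r : ℤ) - 1 - 2 * (i : ℤ)) * Yv ^ 2))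
    = Xv ^ (r * (r + 1) / 2) * Yv ^ r * ((1 + Yv) / (1 + Xv ^ r * Yv)) *
        ∏ i ∈ Finset.range r,
          (1 - Xv ^ (r + 1 + i) * Yv ^ 2) / (1 - Xv ^ (2 * i + 1) * Yv ^ 2) := by
  -- Step 1: inner telescoping of the double product
  have h1 : (∏ i ∈ Finset.range r, ∏ j ∈ Finset.Ioo i r,
        (1 - Xv ^ (2 * (r : ℤ) - (i : ℤ) - (j : ℤ)) * Yv ^ 2) /
          (1 - Xv ^ (2 * (r : ℤ) - 1 - (i : ℤ) - (j : ℤ)) * Yv ^ 2))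
      = ∏ i ∈ range r, fE (2 * (r - i) - 1) / fE (r - i) := by
    refine prod_congr rfl fun i hi => ?_
    rw [mem_range] at hi
    set m := r - 1 - i with hm
    have hrm : r = i + 1 + m := by omega
    have step1 : (∏ j ∈ Finset.Ioo i r,
        (1 - Xv ^ (2 * (r : ℤ) - (i : ℤ) - (j : ℤ)) * Yv ^ 2) /
          (1 - Xv ^ (2 * (r : ℤ) - 1 - (i : ℤ) - (j : ℤ)) * Yv ^ 2))
        = ∏ t ∈ range m, fE (2 * m + 1 - t) / fE (2 * m + 1 - (t + 1)) := by
      rw [← Finset.Ico_add_one_left_eq_Ioo, Finset.prod_Ico_eq_prod_range,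
        show r - (i + 1) = m by omega]
      refine prod_congr rfl fun t ht => ?_
      rw [mem_range] at ht
      have e1 : 2 * (r : ℤ) - (i : ℤ) - ((i + 1 + t : ℕ) : ℤ) = ((2 * m + 1 - t : ℕ) : ℤ) := by
        omega
      have e2 : 2 * (r : ℤ) - 1 - (i : ℤ) - ((i + 1 + t : ℕ) : ℤ)
          = ((2 * m + 1 - (t + 1) : ℕ) : ℤ) := by omega
      rw [e1, e2, zpow_natCast, zpow_natCast]
      rfl
    rw [step1, tele (fun t => fE (2 * m + 1 - t)) (fun t => fE_ne _) m]
    congr 2 <;> omega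
  -- Step 2: rewrite the second product
  have h2 : (∏ i ∈ Finset.range r,
        Xv ^ ((r : ℤ) - (i : ℤ)) * Yv * (1 - Xv ^ ((r : ℤ) - (i : ℤ)) * Yv) *
            (1 + Xv ^ ((r : ℤ) - 1 - (i : ℤ)) * Yv) /
          (1 - Xv ^ (2 * (r : ℤ) - 1 - 2 * (i : ℤ)) * Yv ^ 2))
      = ∏ i ∈ range r, Xv ^ (r - i) * Yv * gE (r - i) * hE (r - 1 - i) / fE (2 * (r - i) - 1) := by
    refine prod_congr rfl fun i hi => ?_
    rw [mem_range] at hi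
    have e1 : (r : ℤ) - (i : ℤ) = ((r - i : ℕ) : ℤ) := by omega
    have e2 : (r : ℤ) - 1 - (i : ℤ) = ((r - 1 - i : ℕ) : ℤ) := by omega
    have e3 : 2 * (r : ℤ) - 1 - 2 * (i : ℤ) = ((2 * (r - i) - 1 : ℕ) : ℤ) := by omega
    rw [e1, e2, e3, zpow_natCast, zpow_natCast, zpow_natCast]
    rfl
  rw [h1, h2, ← prod_mul_distrib]
  -- Step 3: cancel and reflect
  have h3 : (∏ i ∈ range r,
        fE (2 * (r - i) - 1) / fE (r - i) *
          (Xv ^ (r - i) * Yv * gE (r - i) * hE (r - 1 - i) / fE (2 * (r - i) - 1)))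
      = ∏ t ∈ range r, Xv ^ (t + 1) * Yv * gE (t + 1) * hE t / fE (t + 1) := by
    rw [← Finset.prod_range_reflect
      (fun t => Xv ^ (t + 1) * Yv * gE (t + 1) * hE t / fE (t + 1)) r]
    refine prod_congr rfl fun i hi => ?_
    rw [mem_range] at hi
    have e : r - 1 - i + 1 = r - i := by omega
    simp only [e]
    have hf1 := fE_ne (2 * (r - i) - 1)
    have hf2 := fE_ne (r - i)
    field_simp
  rw [h3]
  -- Step 4: split the product
  have h4 : (∏ t ∈ range r, Xv ^ (t + 1) * Yv * gE (t + 1) * hE t / fE (t + 1))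
      = (Xv ^ (r * (r + 1) / 2) * Yv ^ r * ∏ t ∈ range r, hE t * gE (t + 1)) /
          ∏ t ∈ range r, fE (t + 1) := by
    rw [prod_div_distrib]
    congr 1
    have : (∏ t ∈ range r, Xv ^ (t + 1) * Yv * gE (t + 1) * hE t)
        = (∏ t ∈ range r, Xv ^ (t + 1)) * (∏ t ∈ range r, Yv) *
            ∏ t ∈ range r, hE t * gE (t + 1) := by
      rw [← prod_mul_distrib, ← prod_mul_distrib]
      exact prod_congr rfl fun t _ => by ring
    have hsum : (∑ t ∈ range r, (t + 1)) = r * (r + 1) / 2 := by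
      have e : (∑ t ∈ range r, (t + 1)) = ∑ i ∈ range (r + 1), i := by
        rw [Finset.sum_range_succ' (fun i => i) r]; simp
      have hs : (∑ i ∈ range (r + 1), i) * 2 = r * (r + 1) := by
        rw [Finset.sum_range_id_mul_two, Nat.add_sub_cancel, Nat.mul_comm]
      obtain ⟨k, hk⟩ : ∃ k, r * (r + 1) = k := ⟨_, rfl⟩
      rw [hk] at hs ⊢
      omega
    rw [this, prod_const, prod_pow_eq_pow_sum, hsum, card_range]
  rw [h4, hg_prod]
  -- Step 5: right-hand side
  have hR : (∏ i ∈ range r, (1 - Xv ^ (r + 1 + i) * Yv ^ 2) / (1 - Xv ^ (2 * i + 1) * Yv ^ 2))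
      = (∏ i ∈ range r, fE (r + 1 + i)) / ∏ i ∈ range r, fE (2 * i + 1) := by
    rw [← prod_div_distrib]
    rfl
  have hY : (1 + Yv) / (1 + Xv ^ r * Yv) = hE 0 / hE r := by
    simp [hE]
  rw [hR, hY]
  -- Final assembly
  have key : (∏ t ∈ range r, fE (2 * t + 1)) * ∏ t ∈ range r, fE (2 * t + 2)
      = (∏ t ∈ range r, fE (t + 1)) * ∏ t ∈ range r, fE (r + 1 + t) := by
    rw [pair_prod, split_prod]
  have hB : (∏ t ∈ range r, fE (t + 1)) ≠ 0 :=
    prod_ne_zero_iff.mpr fun t _ => fE_ne _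
  have hD : (∏ t ∈ range r, fE (2 * t + 1)) ≠ 0 :=
    prod_ne_zero_iff.mpr fun t _ => fE_ne _
  have hHr := hE_ne r
  field_simp
  linear_combination (Xv ^ (r * (r + 1) / 2) * Yv ^ r * hE 0) * key
end

section
/- (Identity (eq:c−), the evaluation of the product C^{−}_{w′_r}(s) = ∏_{α>0, w′_r α<0} c″_α(σ□_s) in the proof of Proposition 4.8): For every integer r ≥ 1, the identity ∏_{1≤i<j≤r} (1 − X^{2r+2−i−j}Y²)/(1 − X^{2r+1−i−j}Y²) · ∏_{i=1}^{r} [ X (X^{2r−2i}Y² − 1) / (1 − X^{2r+1−2i}Y²) ] = (−X)^{r} · (1 − Y²)/(1 − X^{2r}Y²) · ∏_{i=1}^{r} (1 − X^{r+i}Y²)/(1 − X^{2i−1}Y²) holds in ℚ(X,Y). -/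
/-!
Identity (eq:c−): the evaluation of `C^{−}_{w′_r}(s) = ∏_{α>0, w′_r α<0} c″_α(σ□_s)`
in the proof of Proposition 4.8, as an identity in `ℚ(X,Y)` (with `X = q⁻¹`, `Y = q⁻ˢ`).
-/

open Finset

noncomputable def tt (k : ℕ) : RF2 := 1 - Xv ^ k * Yv ^ 2

lemma poly_ne (k : ℕ) :
    (1 : MvPolynomial (Fin 2) ℚ) - MvPolynomial.X 0 ^ k * MvPolynomial.X 1 ^ 2 ≠ 0 := by
  intro h
  have h2 := congrArg (MvPolynomial.eval (fun _ => (2 : ℚ))) h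
  simp at h2
  have h1 : (1 : ℚ) ≤ 2 ^ k := one_le_pow₀ (by norm_num)
  nlinarith

lemma tt_ne (k : ℕ) : tt k ≠ 0 := by
  unfold tt
  have heq : (1 : RF2) - Xv ^ k * Yv ^ 2
      = algebraMap (MvPolynomial (Fin 2) ℚ) RF2
          (1 - MvPolynomial.X 0 ^ k * MvPolynomial.X 1 ^ 2) := by
    simp [Xv, Yv, map_sub, map_mul, map_pow]
  rw [heq]
  intro h
  exact poly_ne k (IsFractionRing.to_map_eq_zero_iff.mp h)

lemma tele_s10 (f : ℕ → RF2) (hf : ∀ k, f k ≠ 0) (a : ℕ) :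
    ∀ b, a ≤ b → ∏ j ∈ Finset.Ico a b, (f j / f (j + 1)) = f a / f b := by
  intro b hb
  induction b, hb using Nat.le_induction with
  | base => simp [div_self (hf a)]
  | succ b hb ih =>
      rw [Finset.prod_Ico_succ_top (by omega), ih, div_mul_div_comm, mul_comm (f a),
        mul_div_mul_left _ _ (hf b)]

lemma parity (f : ℕ → RF2) (r : ℕ) :
    ∏ k ∈ range (2 * r), f k = (∏ i ∈ range r, f (2 * i)) * ∏ i ∈ range r, f (2 * i + 1) := by
  induction r with
  | zero => simp
  | succ n ih =>
      rw [show 2 * (n + 1) = 2 * n + 1 + 1 from by ring, prod_range_succ, prod_range_succ,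
        prod_range_succ, prod_range_succ, ih]
      ring

lemma key_prod (r : ℕ) :
    (∏ i ∈ range r, tt (2 * i)) * (tt (2 * r) * ∏ i ∈ range r, tt (2 * i + 1))
      = tt 0 * ((∏ i ∈ range r, tt (r + 1 + i)) * ∏ i ∈ range r, tt (i + 1)) := by
  have l : (∏ i ∈ range r, tt (2 * i)) * (tt (2 * r) * ∏ i ∈ range r, tt (2 * i + 1))
      = ∏ k ∈ range (2 * r + 1), tt k := by
    rw [prod_range_succ, parity tt r]; ring
  have r1 : tt 0 * ∏ i ∈ range r, tt (i + 1) = ∏ k ∈ range (r + 1), tt k := by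
    rw [prod_range_succ']; ring
  have r2 : (∏ k ∈ range (r + 1), tt k) * ∏ i ∈ range r, tt (r + 1 + i)
      = ∏ k ∈ range (2 * r + 1), tt k := by
    rw [show 2 * r + 1 = r + 1 + r from by ring, Finset.prod_range_add tt (r+1) r]
  rw [l, ← r2, ← r1]; ring

/-- **Identity (eq:c−)**: for every `r ≥ 1`,
`∏_{1≤i<j≤r} (1 − X^{2r+2−i−j}Y²)/(1 − X^{2r+1−i−j}Y²)
 · ∏_{i=1}^{r} X (X^{2r−2i}Y² − 1)/(1 − X^{2r+1−2i}Y²)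
 = (−X)^r (1 − Y²)/(1 − X^{2r}Y²) · ∏_{i=1}^{r} (1 − X^{r+i}Y²)/(1 − X^{2i−1}Y²)`
in `ℚ(X,Y)`.  (Below, indices are shifted to be 0-based: `i,j ↦ i+1,j+1`.) -/
theorem c_minus_identity (r : ℕ) (hr : 1 ≤ r) :
    (∏ i ∈ Finset.range r, ∏ j ∈ Finset.Ioo i r,
        (1 - Xv ^ (2 * (r : ℤ) - (i : ℤ) - (j : ℤ)) * Yv ^ 2) /
          (1 - Xv ^ (2 * (r : ℤ) - 1 - (i : ℤ) - (j : ℤ)) * Yv ^ 2)) *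
      (∏ i ∈ Finset.range r,
        Xv * (Xv ^ (2 * (r : ℤ) - 2 - 2 * (i : ℤ)) * Yv ^ 2 - 1) /
          (1 - Xv ^ (2 * (r : ℤ) - 1 - 2 * (i : ℤ)) * Yv ^ 2))
    = (-Xv) ^ r * ((1 - Yv ^ 2) / (1 - Xv ^ (2 * r) * Yv ^ 2)) *
        ∏ i ∈ Finset.range r,
          (1 - Xv ^ (r + 1 + i) * Yv ^ 2) / (1 - Xv ^ (2 * i + 1) * Yv ^ 2) := by
  have hA : ∀ i ∈ range r, (∏ j ∈ Finset.Ioo i r,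
        (1 - Xv ^ (2 * (r : ℤ) - (i : ℤ) - (j : ℤ)) * Yv ^ 2) /
          (1 - Xv ^ (2 * (r : ℤ) - 1 - (i : ℤ) - (j : ℤ)) * Yv ^ 2))
      = tt (2 * r - 1 - 2 * i) / tt (r - i) := by
    intro i hi
    rw [mem_range] at hi
    rw [show Finset.Ioo i r = Finset.Ico (i + 1) r from by ext j; simp only [Finset.mem_Ioo, Finset.mem_Ico]; omega]
    have ht := tele_s10 (fun j => tt (2 * r - i - j)) (fun k => tt_ne _) (i + 1) r hi
    rw [show 2 * r - i - (i + 1) = 2 * r - 1 - 2 * i from by omega,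
      show 2 * r - i - r = r - i from by omega] at ht
    rw [← ht]
    apply Finset.prod_congr rfl
    intro j hj
    rw [Finset.mem_Ico] at hj
    unfold tt
    rw [show (2 * (r : ℤ) - i - j) = ((2 * r - i - j : ℕ) : ℤ) from by omega, zpow_natCast,
      show (2 * (r : ℤ) - 1 - i - j) = ((2 * r - i - (j + 1) : ℕ) : ℤ) from by omega, zpow_natCast]
  have hB : ∀ i ∈ range r,
      Xv * (Xv ^ (2 * (r : ℤ) - 2 - 2 * (i : ℤ)) * Yv ^ 2 - 1) /
        (1 - Xv ^ (2 * (r : ℤ) - 1 - 2 * (i : ℤ)) * Yv ^ 2)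
      = (-Xv) * (tt (2 * r - 2 - 2 * i) / tt (2 * r - 1 - 2 * i)) := by
    intro i hi
    rw [mem_range] at hi
    unfold tt
    rw [show (2 * (r : ℤ) - 2 - 2 * i) = ((2 * r - 2 - 2 * i : ℕ) : ℤ) from by omega, zpow_natCast,
      show (2 * (r : ℤ) - 1 - 2 * i) = ((2 * r - 1 - 2 * i : ℕ) : ℤ) from by omega, zpow_natCast]
    ring
  rw [Finset.prod_congr rfl hA, Finset.prod_congr rfl hB]
  have e1 : ∏ i ∈ range r, tt (2 * r - 2 - 2 * i) = ∏ i ∈ range r, tt (2 * i) := by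
    rw [← Finset.prod_range_reflect (fun i => tt (2 * i)) r]
    apply Finset.prod_congr rfl
    intro i hi; rw [mem_range] at hi
    congr 1; omega
  have e2 : ∏ i ∈ range r, tt (r - i) = ∏ i ∈ range r, tt (i + 1) := by
    rw [← Finset.prod_range_reflect (fun i => tt (i + 1)) r]
    apply Finset.prod_congr rfl
    intro i hi; rw [mem_range] at hi
    congr 1; omega
  have h0 : (1 : RF2) - Yv ^ 2 = tt 0 := by unfold tt; rw [pow_zero, one_mul]
  have h2r : (1 : RF2) - Xv ^ (2 * r) * Yv ^ 2 = tt (2 * r) := rfl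
  have httdef : ∀ k : ℕ, (1 : RF2) - Xv ^ k * Yv ^ 2 = tt k := fun _ => rfl
  rw [h0, h2r]
  simp only [httdef]
  rw [Finset.prod_div_distrib, Finset.prod_mul_distrib, Finset.prod_const, Finset.card_range,
    Finset.prod_div_distrib, Finset.prod_div_distrib, e1, e2]
  have key := key_prod r
  have hne : ∀ s : Finset ℕ, ∀ g : ℕ → ℕ, (∏ i ∈ s, tt (g i)) ≠ 0 :=
    fun s g => Finset.prod_ne_zero_iff.mpr (fun i _ => tt_ne _)
  have hD := hne (range r) (fun i => 2 * r - 1 - 2 * i)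
  have hb := hne (range r) (fun i => i + 1)
  have hd := hne (range r) (fun i => 2 * i + 1)
  have ht0 := tt_ne 0
  have ht2r := tt_ne (2 * r)
  field_simp
  linear_combination (Xv ^ r * (-1) ^ r) * key
end

section
/- (Identity (eq:c−′), the evaluation of the product C^{−′}_{w′_r}(s) = ∏_{α>0, w′_r α<0} c‴_α(σ□_s) in the proof of Proposition 4.9): For every integer r ≥ 1, the identity ∏_{1≤i<j≤r} (1 − X^{2r+2−i−j}Y²)/(1 − X^{2r+1−i−j}Y²) · ∏_{i=1}^{r} [ X^{2r+1−2i} Y² (1 − X^{i−r}Y^{−1})(1 + X^{r+1−i}Y) / (1 − X^{2r+1−2i}Y²) ] = (−1)^{r} X^{r(r+1)/2} Y^{r} · (1 − Y)/(1 − X^{r}Y) · ∏_{i=1}^{r} (1 − X^{r+i}Y²)/(1 − X^{2i−1}Y²) holds in ℚ(X,Y). -/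
/-!
Identity (eq:c−′): the evaluation of `C^{−′}_{w′_r}(s) = ∏_{α>0, w′_r α<0} c‴_α(σ□_s)`
in the proof of Proposition 4.9, as an identity in `ℚ(X,Y)` (with `X = q⁻¹`, `Y = q⁻ˢ`).
-/

open Finset

lemma alg_inj : Function.Injective (algebraMap (MvPolynomial (Fin 2) ℚ) RF2) :=
  IsFractionRing.injective _ _

lemma Xv_ne : Xv ≠ 0 := by
  intro h
  exact MvPolynomial.X_ne_zero 0 (alg_inj (h.trans (map_zero _).symm))

lemma Yv_ne : Yv ≠ 0 := by
  intro h
  exact MvPolynomial.X_ne_zero 1 (alg_inj (h.trans (map_zero _).symm))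

lemma one_sub_ne (a b : ℕ) (hb : 0 < b) : 1 - Xv ^ a * Yv ^ b ≠ 0 := by
  intro h
  have h1 : Xv ^ a * Yv ^ b = 1 := (sub_eq_zero.mp h).symm
  have h2 : (MvPolynomial.X 0 : MvPolynomial (Fin 2) ℚ) ^ a * MvPolynomial.X 1 ^ b = 1 := by
    apply alg_inj
    rw [map_mul, map_pow, map_pow, map_one]
    exact h1
  have := congrArg (MvPolynomial.eval (fun _ => (0 : ℚ))) h2
  simp [zero_pow hb.ne'] at this

lemma prod_range_two_mul {M : Type*} [CommMonoid M] (f : ℕ → M) (n : ℕ) :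
    ∏ i ∈ range (2 * n), f i = ∏ i ∈ range n, (f (2 * i) * f (2 * i + 1)) := by
  induction n with
  | zero => simp
  | succ n ih =>
    rw [Nat.mul_succ, prod_range_succ, prod_range_succ, prod_range_succ, ih, mul_assoc]

lemma telescope {F : Type*} [Field F] (h : ℕ → F) (hh : ∀ k, h k ≠ 0) (n : ℕ) :
    ∏ k ∈ range n, h k / h (k + 1) = h 0 / h n := by
  induction n with
  | zero => simp [div_self (hh 0)]
  | succ n ih =>
    rw [prod_range_succ, ih, div_mul_div_comm, mul_comm (h 0) (h n),
      mul_div_mul_left _ _ (hh n)]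

lemma factor_eq (b : ℕ) :
    Xv ^ ((2 * b + 1 : ℕ) : ℤ) * Yv ^ 2 * (1 - Xv ^ (-(b : ℤ)) * Yv⁻¹) *
        (1 + Xv ^ (((b + 1 : ℕ)) : ℤ) * Yv) / (1 - Xv ^ ((2 * b + 1 : ℕ) : ℤ) * Yv ^ 2)
    = -(Xv ^ (b + 1) * Yv) *
        ((1 - Xv ^ b * Yv) * (1 + Xv ^ (b + 1) * Yv) / (1 - Xv ^ (2 * b + 1) * Yv ^ 2)) := by
  rw [zpow_neg, zpow_natCast, zpow_natCast, zpow_natCast]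
  have hXb : Xv ^ b ≠ 0 := pow_ne_zero _ Xv_ne
  have key : Xv ^ (2 * b + 1) * Yv ^ 2 * (1 - (Xv ^ b)⁻¹ * Yv⁻¹)
      = -(Xv ^ (b + 1) * Yv) * (1 - Xv ^ b * Yv) := by
    have hY : Yv ≠ 0 := Yv_ne
    field_simp
    ring
  rw [key, mul_assoc, mul_div_assoc]

/-- **Identity (eq:c−′)**: for every `r ≥ 1`,
`∏_{1≤i<j≤r} (1 − X^{2r+2−i−j}Y²)/(1 − X^{2r+1−i−j}Y²)
 · ∏_{i=1}^{r} X^{2r+1−2i} Y² (1 − X^{i−r}Y⁻¹)(1 + X^{r+1−i}Y)/(1 − X^{2r+1−2i}Y²)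
 = (−1)^r X^{r(r+1)/2} Y^r (1 − Y)/(1 − X^r Y) · ∏_{i=1}^{r} (1 − X^{r+i}Y²)/(1 − X^{2i−1}Y²)`
in `ℚ(X,Y)`.  (Below, indices are shifted to be 0-based: `i,j ↦ i+1,j+1`.) -/
theorem c_minus_prime_identity (r : ℕ) (hr : 1 ≤ r) :
    (∏ i ∈ Finset.range r, ∏ j ∈ Finset.Ioo i r,
        (1 - Xv ^ (2 * (r : ℤ) - (i : ℤ) - (j : ℤ)) * Yv ^ 2) /
          (1 - Xv ^ (2 * (r : ℤ) - 1 - (i : ℤ) - (j : ℤ)) * Yv ^ 2)) *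
      (∏ i ∈ Finset.range r,
        Xv ^ (2 * (r : ℤ) - 1 - 2 * (i : ℤ)) * Yv ^ 2 *
            (1 - Xv ^ ((i : ℤ) + 1 - (r : ℤ)) * Yv⁻¹) *
            (1 + Xv ^ ((r : ℤ) - (i : ℤ)) * Yv) /
          (1 - Xv ^ (2 * (r : ℤ) - 1 - 2 * (i : ℤ)) * Yv ^ 2))
    = (-1) ^ r * Xv ^ (r * (r + 1) / 2) * Yv ^ r * ((1 - Yv) / (1 - Xv ^ r * Yv)) *
        ∏ i ∈ Finset.range r,
          (1 - Xv ^ (r + 1 + i) * Yv ^ 2) / (1 - Xv ^ (2 * i + 1) * Yv ^ 2) := by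
  -- Step A: the double product telescopes
  have hA : (∏ i ∈ Finset.range r, ∏ j ∈ Finset.Ioo i r,
        (1 - Xv ^ (2 * (r : ℤ) - (i : ℤ) - (j : ℤ)) * Yv ^ 2) /
          (1 - Xv ^ (2 * (r : ℤ) - 1 - (i : ℤ) - (j : ℤ)) * Yv ^ 2))
      = (∏ i ∈ range r, (1 - Xv ^ (2 * i + 1) * Yv ^ 2)) /
        (∏ i ∈ range r, (1 - Xv ^ (i + 1) * Yv ^ 2)) := by
    rw [← prod_div_distrib,
      ← prod_range_reflect
        (fun m => (1 - Xv ^ (2 * m + 1) * Yv ^ 2) / (1 - Xv ^ (m + 1) * Yv ^ 2)) r]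
    refine prod_congr rfl fun i hi => ?_
    have hi' : i < r := mem_range.mp hi
    have h0 : Finset.Ioo i r = Finset.Ico (i + 1) r := (Finset.Ico_add_one_left_eq_Ioo i r)
    rw [h0, prod_Ico_eq_prod_range]
    have ht : ∀ k : ℕ, (1 : RF2) - Xv ^ (2 * r - 1 - 2 * i - k) * Yv ^ 2 ≠ 0 :=
      fun k => one_sub_ne _ _ (by norm_num)
    calc ∏ k ∈ range (r - (i + 1)),
          (1 - Xv ^ (2 * (r : ℤ) - ((i : ℤ)) - ((i + 1 + k : ℕ) : ℤ)) * Yv ^ 2) /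
            (1 - Xv ^ (2 * (r : ℤ) - 1 - ((i : ℤ)) - ((i + 1 + k : ℕ) : ℤ)) * Yv ^ 2)
        = ∏ k ∈ range (r - (i + 1)),
            ((1 - Xv ^ (2 * r - 1 - 2 * i - k) * Yv ^ 2) /
              (1 - Xv ^ (2 * r - 1 - 2 * i - (k + 1)) * Yv ^ 2)) := by
          refine prod_congr rfl fun k hk => ?_
          have hk' : k < r - (i + 1) := mem_range.mp hk
          rw [show 2 * (r : ℤ) - ((i : ℤ)) - ((i + 1 + k : ℕ) : ℤ)
                = ((2 * r - 1 - 2 * i - k : ℕ) : ℤ) by omega,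
            show 2 * (r : ℤ) - 1 - ((i : ℤ)) - ((i + 1 + k : ℕ) : ℤ)
                = ((2 * r - 1 - 2 * i - (k + 1) : ℕ) : ℤ) by omega,
            zpow_natCast, zpow_natCast]
      _ = (1 - Xv ^ (2 * r - 1 - 2 * i - 0) * Yv ^ 2) /
            (1 - Xv ^ (2 * r - 1 - 2 * i - (r - (i + 1))) * Yv ^ 2) :=
          telescope (fun k => 1 - Xv ^ (2 * r - 1 - 2 * i - k) * Yv ^ 2) ht (r - (i + 1))
      _ = (1 - Xv ^ (2 * (r - 1 - i) + 1) * Yv ^ 2) / (1 - Xv ^ ((r - 1 - i) + 1) * Yv ^ 2) := by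
          rw [show 2 * r - 1 - 2 * i - 0 = 2 * (r - 1 - i) + 1 by omega,
            show 2 * r - 1 - 2 * i - (r - (i + 1)) = (r - 1 - i) + 1 by omega]
  -- Step B: rewrite the second product factorwise
  have hB : (∏ i ∈ Finset.range r,
        Xv ^ (2 * (r : ℤ) - 1 - 2 * (i : ℤ)) * Yv ^ 2 *
            (1 - Xv ^ ((i : ℤ) + 1 - (r : ℤ)) * Yv⁻¹) *
            (1 + Xv ^ ((r : ℤ) - (i : ℤ)) * Yv) /
          (1 - Xv ^ (2 * (r : ℤ) - 1 - 2 * (i : ℤ)) * Yv ^ 2))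
      = ∏ b ∈ range r, (-(Xv ^ (b + 1) * Yv) *
          ((1 - Xv ^ b * Yv) * (1 + Xv ^ (b + 1) * Yv) / (1 - Xv ^ (2 * b + 1) * Yv ^ 2))) := by
    rw [← prod_range_reflect
      (fun b => -(Xv ^ (b + 1) * Yv) *
        ((1 - Xv ^ b * Yv) * (1 + Xv ^ (b + 1) * Yv) / (1 - Xv ^ (2 * b + 1) * Yv ^ 2))) r]
    refine prod_congr rfl fun i hi => ?_
    have hi' : i < r := mem_range.mp hi
    rw [show 2 * (r : ℤ) - 1 - 2 * (i : ℤ) = ((2 * (r - 1 - i) + 1 : ℕ) : ℤ) by omega,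
      show (i : ℤ) + 1 - (r : ℤ) = -(((r - 1 - i : ℕ)) : ℤ) by omega,
      show (r : ℤ) - (i : ℤ) = ((((r - 1 - i) + 1 : ℕ)) : ℤ) by omega]
    exact factor_eq (r - 1 - i)
  rw [hA, hB]
  -- split the B product
  have hsplit : ∏ b ∈ range r, (-(Xv ^ (b + 1) * Yv) *
        ((1 - Xv ^ b * Yv) * (1 + Xv ^ (b + 1) * Yv) / (1 - Xv ^ (2 * b + 1) * Yv ^ 2)))
      = ((-1) ^ r * Xv ^ (r * (r + 1) / 2) * Yv ^ r) *
        ((∏ b ∈ range r, (1 - Xv ^ b * Yv)) * (∏ b ∈ range r, (1 + Xv ^ (b + 1) * Yv)) /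
          (∏ b ∈ range r, (1 - Xv ^ (2 * b + 1) * Yv ^ 2))) := by
    rw [prod_mul_distrib]
    congr 1
    · calc ∏ b ∈ range r, -(Xv ^ (b + 1) * Yv)
          = ∏ b ∈ range r, ((-1) * Xv ^ (b + 1) * Yv) := prod_congr rfl fun b _ => by ring
        _ = ((-1 : RF2) ^ r) * (∏ b ∈ range r, Xv ^ (b + 1)) * Yv ^ r := by
            rw [prod_mul_distrib, prod_mul_distrib, prod_const, prod_const, card_range]
        _ = (-1) ^ r * Xv ^ (r * (r + 1) / 2) * Yv ^ r := by
            rw [Finset.prod_pow_eq_pow_sum]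
            have h2 : ∑ i ∈ range (r + 1), i = ∑ b ∈ range r, (b + 1) := by
              rw [Finset.sum_range_succ']
              simp
            have h3 : (∑ b ∈ range r, (b + 1)) * 2 = r * (r + 1) := by
              have := Finset.sum_range_id_mul_two (r + 1)
              rw [h2] at this
              simpa [Nat.mul_comm] using this
            have hs : ∑ b ∈ range r, (b + 1) = r * (r + 1) / 2 := by
              rw [← h3, Nat.mul_div_cancel _ (by norm_num : 0 < 2)]
            rw [hs]
    · rw [prod_div_distrib, prod_mul_distrib]
  rw [hsplit]
  -- abbreviations
  set P1 := ∏ i ∈ range r, (1 - Xv ^ (2 * i + 1) * Yv ^ 2) with hP1def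
  set P2 := ∏ i ∈ range r, (1 - Xv ^ (i + 1) * Yv ^ 2) with hP2def
  set P3 := ∏ i ∈ range r, (1 - Xv ^ (2 * i + 2) * Yv ^ 2) with hP3def
  set P4 := ∏ i ∈ range r, (1 - Xv ^ (r + 1 + i) * Yv ^ 2) with hP4def
  set Q1 := ∏ b ∈ range r, (1 - Xv ^ b * Yv) with hQ1def
  set Q2 := ∏ b ∈ range r, (1 + Xv ^ (b + 1) * Yv) with hQ2def
  set Q3 := ∏ b ∈ range r, (1 - Xv ^ (b + 1) * Yv) with hQ3def
  -- RHS product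
  have hRHS : ∏ i ∈ range r,
      (1 - Xv ^ (r + 1 + i) * Yv ^ 2) / (1 - Xv ^ (2 * i + 1) * Yv ^ 2) = P4 / P1 :=
    prod_div_distrib _ _
  rw [hRHS]
  -- relations
  have hQ : (1 - Xv ^ r * Yv) * Q1 = (1 - Yv) * Q3 := by
    have e1 := prod_range_succ (fun b => 1 - Xv ^ b * Yv) r
    have e2 := prod_range_succ' (fun b => 1 - Xv ^ b * Yv) r
    rw [e2] at e1
    simp only [pow_zero, one_mul] at e1
    rw [← hQ1def, ← hQ3def] at e1
    linear_combination -e1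
  have hQ23 : Q3 * Q2 = P3 := by
    rw [hQ3def, hQ2def, hP3def, ← prod_mul_distrib]
    exact prod_congr rfl fun b _ => by ring
  have hP : P2 * P4 = P1 * P3 := by
    have e1 := Finset.prod_range_add (fun i => 1 - Xv ^ (i + 1) * Yv ^ 2) r r
    have e2 := prod_range_two_mul (fun i => 1 - Xv ^ (i + 1) * Yv ^ 2) r
    rw [show 2 * r = r + r by ring] at e2
    rw [e1] at e2
    have e3 : ∏ i ∈ range r, (1 - Xv ^ (r + i + 1) * Yv ^ 2) = P4 := by
      rw [hP4def]
      exact prod_congr rfl fun i _ => by rw [show r + i + 1 = r + 1 + i by ring]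
    have e4 : ∏ i ∈ range r, ((1 - Xv ^ (2 * i + 1) * Yv ^ 2) * (1 - Xv ^ (2 * i + 1 + 1) * Yv ^ 2))
        = P1 * P3 := by
      rw [prod_mul_distrib, hP1def, hP3def]
    rw [e3, e4] at e2
    rw [hP2def]
    exact e2
  -- nonvanishing
  have hP1ne : P1 ≠ 0 := by
    rw [hP1def]
    exact prod_ne_zero_iff.mpr fun i _ => one_sub_ne _ _ (by norm_num)
  have hP2ne : P2 ≠ 0 := by
    rw [hP2def]
    exact prod_ne_zero_iff.mpr fun i _ => one_sub_ne _ _ (by norm_num)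
  have hXrY : 1 - Xv ^ r * Yv ≠ 0 := by
    have := one_sub_ne r 1 (by norm_num)
    simpa using this
  -- core identity
  have key : (1 - Xv ^ r * Yv) * (Q1 * Q2 * P1) = (1 - Yv) * (P4 * P2) := by
    linear_combination Q2 * P1 * hQ + (1 - Yv) * P1 * hQ23 - (1 - Yv) * hP
  set C := (-1 : RF2) ^ r * Xv ^ (r * (r + 1) / 2) * Yv ^ r with hCdef
  field_simp
  rw [eq_div_iff (by rwa [mul_comm Yv])]
  linear_combination C * key
end
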